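/- arXiv:1608.01803 — 7 statements merged into one kernel-verified Lean document; each statement's English description precedes it below -/
import Mathlib

section
/- Let μ₀ = μ₁ + μ₂ with μ₀ ≥ μ₁ both having compact infinite supports, and write γ_n(μ₁)/γ_n(μ₀) = 1 + β_n. Then β_n ≥ 0 and (1 − ‖p_n(μ₀,·)‖²_{L²(μ₂)})^{−1/2} − 1 ≤ β_n ≤ (1 + ‖p_n(μ₁,·)‖²_{L²(μ₂)})^{1/2} − 1. -/
open MeasureTheory Polynomial Filter

noncomputable section

/-- The (closed) support of a Borel measure on `ℂ`. -/
def msupp (μ : Measure ℂ) : Set ℂ := {z | ∀ U ∈ nhds z, μ U ≠ 0}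

/-- `p` is the sequence of orthonormal polynomials for `μ`:
`p n` has degree `n`, positive (real) leading coefficient, and
`⟪p m, p n⟫_μ = δ_{m n}`. -/
def ONP (μ : Measure ℂ) (p : ℕ → Polynomial ℂ) : Prop :=
  (∀ n, (p n).natDegree = n) ∧
  (∀ n, 0 < ((p n).leadingCoeff).re ∧ ((p n).leadingCoeff).im = 0) ∧
  (∀ m n, ∫ z, (p m).eval z * (starRingEnd ℂ) ((p n).eval z) ∂μ
      = if m = n then 1 else 0)

/-- The `n`-th Christoffel function of the measure `μ` at the point `z`. -/
def christoffel (μ : Measure ℂ) (n : ℕ) (z : ℂ) : ℝ :=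
  sInf {r : ℝ | ∃ P : Polynomial ℂ, P.natDegree ≤ n ∧ P.eval z = 1 ∧
      r = ∫ t, ‖P.eval t‖ ^ 2 ∂μ}

lemma msupp_compl_null (μ : Measure ℂ) : μ (msupp μ)ᶜ = 0 := by
  refine measure_null_of_locally_null _ fun x hx => ?_
  simp only [msupp, Set.mem_compl_iff, Set.mem_setOf_eq] at hx
  push_neg at hx
  obtain ⟨U, hU, hU0⟩ := hx
  exact ⟨U, mem_nhdsWithin_of_mem_nhds hU, hU0⟩

lemma cont_memLp {E : Type*} [NormedAddCommGroup E] (μ : Measure ℂ) [IsFiniteMeasure μ]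
    (hc : IsCompact (msupp μ)) {f : ℂ → E} (hf : Continuous f) (p : ENNReal) :
    MemLp f p μ := by
  obtain ⟨C, hC⟩ := hc.exists_bound_of_continuousOn hf.continuousOn
  refine MemLp.of_bound hf.aestronglyMeasurable C ?_
  have h0 : ∀ᵐ z ∂μ, z ∈ msupp μ := by
    rw [ae_iff]
    exact msupp_compl_null μ
  filter_upwards [h0] with z hz using hC z hz

lemma cont_integrable {E : Type*} [NormedAddCommGroup E] (μ : Measure ℂ) [IsFiniteMeasure μ]
    (hc : IsCompact (msupp μ)) {f : ℂ → E} (hf : Continuous f) :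
    Integrable f μ :=
  memLp_one_iff_integrable.mp (cont_memLp μ hc hf 1)

/-- Cauchy–Schwarz for complex integrals. -/
lemma cs_integral (μ : Measure ℂ) {f g : ℂ → ℂ} (hf : MemLp f 2 μ) (hg : MemLp g 2 μ) :
    ‖∫ z, f z * (starRingEnd ℂ) (g z) ∂μ‖ ^ 2 ≤
      (∫ z, ‖f z‖ ^ 2 ∂μ) * (∫ z, ‖g z‖ ^ 2 ∂μ) := by
  set F := hf.toLp f with hF
  set G := hg.toLp g with hG
  have hnormsq : ∀ (h : ℂ → ℂ) (hh : MemLp h 2 μ),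
      ‖hh.toLp h‖ ^ 2 = ∫ z, ‖h z‖ ^ 2 ∂μ := by
    intro h hh
    have h1 : (fun z => @inner ℂ ℂ _ ((hh.toLp h : Lp ℂ 2 μ) z) ((hh.toLp h : Lp ℂ 2 μ) z))
        =ᵐ[μ] fun z => ((‖h z‖ ^ 2 : ℝ) : ℂ) := by
      filter_upwards [hh.coeFn_toLp] with z hz
      rw [RCLike.inner_apply', hz, mul_comm, Complex.mul_conj, Complex.normSq_eq_norm_sq]
    have h2 := @inner_self_eq_norm_sq_to_K ℂ _ _ _ _ (hh.toLp h)
    have h4 : ∫ z, ((‖h z‖ ^ 2 : ℝ) : ℂ) ∂μ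
        = ((∫ z, ‖h z‖ ^ 2 ∂μ : ℝ) : ℂ) := integral_ofReal
    rw [L2.inner_def, integral_congr_ae h1, h4, ← RCLike.ofReal_pow] at h2
    exact (RCLike.ofReal_inj.mp h2).symm
  have hinner : @inner ℂ _ _ G F = ∫ z, f z * (starRingEnd ℂ) (g z) ∂μ := by
    rw [L2.inner_def]
    refine integral_congr_ae ?_
    filter_upwards [hf.coeFn_toLp, hg.coeFn_toLp] with z h1 h2
    rw [RCLike.inner_apply', h1, h2, mul_comm]
  calc ‖∫ z, f z * (starRingEnd ℂ) (g z) ∂μ‖ ^ 2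
      = ‖@inner ℂ _ _ G F‖ ^ 2 := by rw [hinner]
    _ ≤ (‖G‖ * ‖F‖) ^ 2 := by
        have := @norm_inner_le_norm ℂ _ _ _ _ G F
        have h0 : (0:ℝ) ≤ ‖@inner ℂ _ _ G F‖ := norm_nonneg _
        nlinarith
    _ = ‖F‖ ^ 2 * ‖G‖ ^ 2 := by ring
    _ = (∫ z, ‖f z‖ ^ 2 ∂μ) * (∫ z, ‖g z‖ ^ 2 ∂μ) := by
        rw [hnormsq f hf, hnormsq g hg]

lemma mem_span_of_degree_lt (p : ℕ → Polynomial ℂ) (hd : ∀ k, (p k).natDegree = k)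
    (hne : ∀ k, p k ≠ 0) (n : ℕ) :
    ∀ d (P : Polynomial ℂ), P.natDegree ≤ d → P.degree < (n : WithBot ℕ) →
      P ∈ Submodule.span ℂ (p '' Set.Iio n) := by
  intro d
  induction d using Nat.strong_induction_on with
  | _ d ih =>
    intro P hPd hPn
    by_cases hP : P = 0
    · simp [hP]
    have hk : P.natDegree < n := (natDegree_lt_iff_degree_lt hP).2 hPn
    set k := P.natDegree with hkdef
    have hpk0 : (p k).leadingCoeff ≠ 0 := leadingCoeff_ne_zero.mpr (hne k)
    set c : ℂ := P.leadingCoeff / (p k).leadingCoeff with hc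
    have hc0 : c ≠ 0 := div_ne_zero (leadingCoeff_ne_zero.mpr hP) hpk0
    have hmem : C c * p k ∈ Submodule.span ℂ (p '' Set.Iio n) := by
      have hx : p k ∈ p '' Set.Iio n := ⟨k, hk, rfl⟩
      have h := Submodule.smul_mem (Submodule.span ℂ (p '' Set.Iio n)) c
        (Submodule.subset_span hx)
      simpa [Polynomial.smul_eq_C_mul] using h
    have hlcq : (C c * p k).leadingCoeff = P.leadingCoeff := by
      rw [leadingCoeff_mul, leadingCoeff_C, hc, div_mul_cancel₀ _ hpk0]
    have hdeg : (C c * p k).degree = P.degree := by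
      rw [degree_C_mul hc0, degree_eq_natDegree (hne k), degree_eq_natDegree hP, hd k]
    set Q := P - C c * p k with hQ
    by_cases hQ0 : Q = 0
    · have hPe : P = C c * p k := by
        have := sub_eq_zero.mp hQ0
        exact this
      rw [hPe]; exact hmem
    · have hdq : Q.degree < P.degree := degree_sub_lt hdeg.symm hP hlcq.symm
      have hQk : Q.natDegree < k := by
        rw [natDegree_lt_iff_degree_lt hQ0]
        rw [degree_eq_natDegree hP] at hdq
        exact hdq
      have hQspan := ih Q.natDegree (lt_of_lt_of_le hQk hPd) Q le_rfl
        (lt_trans hdq hPn)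
      have hPe : P = Q + C c * p k := by rw [hQ]; ring
      rw [hPe]
      exact Submodule.add_mem _ hQspan hmem

/-- With `γ_n(μ₁)/γ_n(μ₀) = 1 + β_n`, one has `β_n ≥ 0` and
`(1 − ‖p_n(μ₀,·)‖²_{L²(μ₂)})^{−1/2} − 1 ≤ β_n ≤ (1 + ‖p_n(μ₁,·)‖²_{L²(μ₂)})^{1/2} − 1`. -/
theorem stmt_6 (μ0 μ1 μ2 : Measure ℂ) [IsFiniteMeasure μ1] [IsFiniteMeasure μ2]
    (hsum : μ0 = μ1 + μ2) (hle : μ1 ≤ μ0)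
    (h0c : IsCompact (msupp μ0)) (h0i : (msupp μ0).Infinite)
    (h1c : IsCompact (msupp μ1)) (h1i : (msupp μ1).Infinite)
    (p0 p1 : ℕ → Polynomial ℂ) (hp0 : ONP μ0 p0) (hp1 : ONP μ1 p1)
    (β : ℕ → ℝ)
    (hβ : ∀ n, ((p1 n).leadingCoeff).re / ((p0 n).leadingCoeff).re = 1 + β n) :
    ∀ n : ℕ,
      0 ≤ β n ∧
      (Real.sqrt (1 - ∫ z, ‖(p0 n).eval z‖ ^ 2 ∂μ2))⁻¹ - 1 ≤ β n ∧
      β n ≤ Real.sqrt (1 + ∫ z, ‖(p1 n).eval z‖ ^ 2 ∂μ2) - 1 := by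
  intro n
  obtain ⟨hd0, hlc0, ho0⟩ := hp0
  obtain ⟨hd1, hlc1, ho1⟩ := hp1
  have hμ0fin : IsFiniteMeasure μ0 := by rw [hsum]; infer_instance
  have hμ2le : μ2 ≤ μ0 := by rw [hsum]; exact Measure.le_add_left le_rfl
  -- nonvanishing of the orthonormal polynomials
  have hne0 : ∀ k, p0 k ≠ 0 := fun k h => by
    have := (hlc0 k).1; rw [h] at this; simp at this
  have hne1 : ∀ k, p1 k ≠ 0 := fun k h => by
    have := (hlc1 k).1; rw [h] at this; simp at this
  -- integrability facts
  have hint0 : ∀ {f : ℂ → ℂ}, Continuous f → Integrable f μ0 :=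
    fun hf => cont_integrable μ0 h0c hf
  have hint1 : ∀ {f : ℂ → ℂ}, Continuous f → Integrable f μ1 :=
    fun hf => (hint0 hf).mono_measure hle
  have hint2 : ∀ {f : ℂ → ℂ}, Continuous f → Integrable f μ2 :=
    fun hf => (hint0 hf).mono_measure hμ2le
  have hcont : ∀ (P Q : Polynomial ℂ),
      Continuous fun z => P.eval z * (starRingEnd ℂ) (Q.eval z) :=
    fun P Q => (P.continuous).mul (Complex.continuous_conj.comp Q.continuous)
  have hcontabs : ∀ (P : Polynomial ℂ), Continuous fun z => ‖P.eval z‖ ^ 2 :=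
    fun P => (continuous_norm.comp P.continuous).pow 2
  have hm0 : ∀ P : Polynomial ℂ, MemLp (fun z => P.eval z) 2 μ0 :=
    fun P => cont_memLp μ0 h0c P.continuous 2
  have hm1 : ∀ P : Polynomial ℂ, MemLp (fun z => P.eval z) 2 μ1 :=
    fun P => (hm0 P).mono_measure hle
  -- ∫ |P|² as a complex integral
  have habs : ∀ (ν : Measure ℂ) (P : Polynomial ℂ),
      ∫ z, P.eval z * (starRingEnd ℂ) (P.eval z) ∂ν
        = ((∫ z, ‖P.eval z‖ ^ 2 ∂ν : ℝ) : ℂ) := by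
    intro ν P
    have h4 : ∫ z, ((‖P.eval z‖ ^ 2 : ℝ) : ℂ) ∂ν
        = ((∫ z, ‖P.eval z‖ ^ 2 ∂ν : ℝ) : ℂ) := integral_ofReal
    rw [← h4]
    refine integral_congr_ae (Eventually.of_forall fun z => ?_)
    simp only [Complex.mul_conj, Complex.normSq_eq_norm_sq]
  -- orthogonality of lower-degree polynomials against p n
  have horthgen : ∀ (ν : Measure ℂ) (p : ℕ → Polynomial ℂ),
      (∀ k, (p k).natDegree = k) → (∀ k, p k ≠ 0) →
      (∀ m k, ∫ z, (p m).eval z * (starRingEnd ℂ) ((p k).eval z) ∂ν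
          = if m = k then 1 else 0) →
      (∀ {f : ℂ → ℂ}, Continuous f → Integrable f ν) →
      ∀ (P : Polynomial ℂ), P.degree < (n : WithBot ℕ) →
        ∫ z, P.eval z * (starRingEnd ℂ) ((p n).eval z) ∂ν = 0 := by
    intro ν p hd hne ho hint P hPdeg
    have hmem := mem_span_of_degree_lt p hd hne n P.natDegree P le_rfl hPdeg
    clear hPdeg
    induction hmem using Submodule.span_induction with
    | mem x hx =>
      obtain ⟨k, hk, rfl⟩ := hx
      rw [ho k n]
      simp [Nat.ne_of_lt hk]
    | zero => simp
    | add x y hx hy ihx ihy =>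
      have : (fun z => (x + y).eval z * (starRingEnd ℂ) ((p n).eval z))
          = fun z => x.eval z * (starRingEnd ℂ) ((p n).eval z)
            + y.eval z * (starRingEnd ℂ) ((p n).eval z) := by
        funext z; simp [add_mul]
      rw [this, integral_add (hint (hcont x (p n))) (hint (hcont y (p n))), ihx, ihy, add_zero]
    | smul a x hx ihx =>
      have : (fun z => (a • x).eval z * (starRingEnd ℂ) ((p n).eval z))
          = fun z => a * (x.eval z * (starRingEnd ℂ) ((p n).eval z)) := by
        funext z; simp [mul_assoc]
      rw [this, integral_const_mul, ihx, mul_zero]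
  -- leading coefficients
  set γ0 : ℝ := ((p0 n).leadingCoeff).re with hγ0def
  set γ1 : ℝ := ((p1 n).leadingCoeff).re with hγ1def
  have hγ0pos : 0 < γ0 := (hlc0 n).1
  have hγ1pos : 0 < γ1 := (hlc1 n).1
  have hγ0c : (p0 n).leadingCoeff = (γ0 : ℂ) := by
    apply Complex.ext <;> simp [hγ0def, (hlc0 n).2]
  have hγ1c : (p1 n).leadingCoeff = (γ1 : ℂ) := by
    apply Complex.ext <;> simp [hγ1def, (hlc1 n).2]
  set t : ℝ := 1 + β n with htdef
  have htval : γ1 / γ0 = t := hβ n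
  have htpos : 0 < t := htval ▸ div_pos hγ1pos hγ0pos
  have hγ1t : γ1 = t * γ0 := by
    field_simp at htval
    linarith [htval]
  -- the key inner-product computation, done generically
  have hinnergen : ∀ (ν : Measure ℂ) (q r : ℕ → Polynomial ℂ) (c : ℂ),
      (∀ k, (r k).natDegree = k) → (∀ k, r k ≠ 0) →
      (∀ m k, ∫ z, (r m).eval z * (starRingEnd ℂ) ((r k).eval z) ∂ν
          = if m = k then 1 else 0) →
      (∀ {f : ℂ → ℂ}, Continuous f → Integrable f ν) →
      (q n).natDegree = n → (r n).natDegree = n → q n ≠ 0 →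
      (q n).leadingCoeff = c * (r n).leadingCoeff →
      ∫ z, (q n).eval z * (starRingEnd ℂ) ((r n).eval z) ∂ν = c := by
    intro ν q r c hdr hner hor hint hdq hdrn hqne0 hlc
    have hc0 : c ≠ 0 := by
      intro h
      rw [h, zero_mul] at hlc
      exact hqne0 (leadingCoeff_eq_zero.mp hlc)
    set Q : Polynomial ℂ := q n - C c * r n with hQ
    have hQdeg : Q.degree < (n : WithBot ℕ) := by
      by_cases hQ0 : Q = 0
      · rw [hQ0, degree_zero]; exact WithBot.bot_lt_coe n
      · have hqne := hqne0
        have h1 : (q n).degree = (C c * r n).degree := by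
          rw [degree_C_mul hc0, degree_eq_natDegree hqne, degree_eq_natDegree (hner n),
            hdq, hdrn]
        have h2 : (q n).leadingCoeff = (C c * r n).leadingCoeff := by
          rw [leadingCoeff_mul, leadingCoeff_C, hlc]
        have := degree_sub_lt h1 hqne h2
        rw [degree_eq_natDegree hqne, hdq] at this
        exact this
    have hsplit : (fun z => (q n).eval z * (starRingEnd ℂ) ((r n).eval z))
        = fun z => Q.eval z * (starRingEnd ℂ) ((r n).eval z)
          + c * ((r n).eval z * (starRingEnd ℂ) ((r n).eval z)) := by
      funext z
      simp only [hQ, eval_sub, eval_mul, eval_C]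
      ring
    rw [hsplit, integral_add (hint (hcont Q (r n)))
        (by
          have : Continuous fun z => c * ((r n).eval z * (starRingEnd ℂ) ((r n).eval z)) :=
            continuous_const.mul (hcont (r n) (r n))
          exact hint this),
      horthgen ν r hdr hner hor hint Q hQdeg, integral_const_mul, hor n n]
    simp
  -- compute the two inner products
  have hip0 : ∫ z, (p1 n).eval z * (starRingEnd ℂ) ((p0 n).eval z) ∂μ0 = ((t : ℝ) : ℂ) := by
    refine hinnergen μ0 p1 p0 ((t : ℝ) : ℂ) hd0 hne0 ho0 hint0 (hd1 n) (hd0 n) (hne1 n) ?_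
    rw [hγ0c, hγ1c, hγ1t]
    push_cast; ring
  have hip1 : ∫ z, (p0 n).eval z * (starRingEnd ℂ) ((p1 n).eval z) ∂μ1 = ((t⁻¹ : ℝ) : ℂ) := by
    refine hinnergen μ1 p0 p1 ((t⁻¹ : ℝ) : ℂ) hd1 hne1 ho1 hint1 (hd0 n) (hd1 n) (hne0 n) ?_
    rw [hγ0c, hγ1c]
    have hr : γ0 = t⁻¹ * γ1 := by rw [hγ1t]; field_simp
    have h5 := congrArg (fun x : ℝ => (x : ℂ)) hr
    push_cast at h5 ⊢
    exact h5
  -- norms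
  have hnorm00 : ∫ z, ‖(p0 n).eval z‖ ^ 2 ∂μ0 = 1 := by
    have h := ho0 n n
    rw [habs μ0 (p0 n)] at h
    simp at h
    exact_mod_cast h
  have hnorm11 : ∫ z, ‖(p1 n).eval z‖ ^ 2 ∂μ1 = 1 := by
    have h := ho1 n n
    rw [habs μ1 (p1 n)] at h
    simp at h
    exact_mod_cast h
  set A : ℝ := ∫ z, ‖(p0 n).eval z‖ ^ 2 ∂μ2 with hA
  set B : ℝ := ∫ z, ‖(p1 n).eval z‖ ^ 2 ∂μ2 with hB
  have hAnn : 0 ≤ A := integral_nonneg fun z => sq_nonneg _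
  have hBnn : 0 ≤ B := integral_nonneg fun z => sq_nonneg _
  have hsplit0 : (1:ℝ) = (∫ z, ‖(p0 n).eval z‖ ^ 2 ∂μ1) + A := by
    rw [← hnorm00, hsum, integral_add_measure
      (memLp_one_iff_integrable.mp (cont_memLp μ1 h1c (hcontabs (p0 n)) 1))
      ((cont_integrable μ0 h0c (hcontabs (p0 n))).mono_measure hμ2le)]
  have hsplit1 : ∫ z, ‖(p1 n).eval z‖ ^ 2 ∂μ0 = 1 + B := by
    rw [hsum, integral_add_measure
      (memLp_one_iff_integrable.mp (cont_memLp μ1 h1c (hcontabs (p1 n)) 1))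
      ((cont_integrable μ0 h0c (hcontabs (p1 n))).mono_measure hμ2le), hnorm11]
  -- Cauchy–Schwarz
  have hcs0 := cs_integral μ0 (hm0 (p1 n)) (hm0 (p0 n))
  rw [hip0, hsplit1, hnorm00, mul_one] at hcs0
  have hcs1 := cs_integral μ1 (hm1 (p0 n)) (hm1 (p1 n))
  rw [hip1, hnorm11, mul_one] at hcs1
  have habs_t : ‖((t : ℝ) : ℂ)‖ = t := by
    rw [Complex.norm_real, Real.norm_eq_abs, abs_of_pos htpos]
  have habs_tinv : ‖((t⁻¹ : ℝ) : ℂ)‖ = t⁻¹ := by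
    rw [Complex.norm_real, Real.norm_eq_abs, abs_of_pos (inv_pos.mpr htpos)]
  rw [habs_t] at hcs0
  rw [habs_tinv] at hcs1
  -- hcs0 : t ^ 2 ≤ 1 + B;  hcs1 : (t⁻¹) ^ 2 ≤ ∫ |p0|² dμ1 = 1 - A
  have ha : (t⁻¹) ^ 2 ≤ 1 - A := by
    have : (∫ z, ‖(p0 n).eval z‖ ^ 2 ∂μ1) = 1 - A := by linarith [hsplit0]
    rwa [this] at hcs1
  have hu : t * t⁻¹ = 1 := mul_inv_cancel₀ (ne_of_gt htpos)
  have hupos : 0 < t⁻¹ := inv_pos.mpr htpos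
  -- β n ≥ 0
  have ht1 : 1 ≤ t := by nlinarith [sq_nonneg (t⁻¹ - 1), sq_nonneg (t - 1)]
  refine ⟨by linarith, ?_, ?_⟩
  · -- lower bound
    have hs1 : t⁻¹ ≤ Real.sqrt (1 - A) := by
      have := Real.sqrt_le_sqrt ha
      rwa [Real.sqrt_sq hupos.le] at this
    have h5 : (Real.sqrt (1 - A))⁻¹ ≤ t := by
      have h6 := inv_anti₀ hupos hs1
      rwa [inv_inv] at h6
    linarith
  · -- upper bound
    have hs2 : t ≤ Real.sqrt (1 + B) := by
      have := Real.sqrt_le_sqrt hcs0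
      rwa [Real.sqrt_sq htpos.le] at this
    linarith
end
end

section
/- Let μ₀ = μ₁ + μ₂ with μ₀ ≥ μ₁ having compact infinite supports, and β_n := γ_n(μ₁)/γ_n(μ₀) − 1. Then ‖p_n(μ₀,·) − p_n(μ₁,·)‖²_{L²(μ₀)} = ‖p_n(μ₁,·)‖²_{L²(μ₂)} − 2β_n. -/
open MeasureTheory Polynomial Filter

noncomputable section

lemma msupp_isClosed (μ : Measure ℂ) : IsClosed (msupp μ) := by
  rw [← isOpen_compl_iff, isOpen_iff_mem_nhds]
  intro x hx
  simp only [msupp, Set.mem_compl_iff, Set.mem_setOf_eq, not_forall, not_ne_iff] at hx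
  obtain ⟨U, hU, hU0⟩ := hx
  refine Filter.mem_of_superset (interior_mem_nhds.2 hU) ?_
  intro y hy
  simp only [msupp, Set.mem_compl_iff, Set.mem_setOf_eq, not_forall, not_ne_iff]
  exact ⟨interior U, isOpen_interior.mem_nhds hy,
    le_antisymm (le_trans (measure_mono interior_subset) hU0.le) zero_le⟩

lemma restrict_msupp (μ : Measure ℂ) : μ.restrict (msupp μ) = μ := by
  conv_rhs => rw [← Measure.restrict_add_restrict_compl (μ := μ) (msupp_isClosed μ).measurableSet]
  rw [Measure.restrict_eq_zero.2 (msupp_compl_null μ), add_zero]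

lemma integrable_cont (μ : Measure ℂ) [IsFiniteMeasure μ] (hc : IsCompact (msupp μ))
    {E : Type*} [NormedAddCommGroup E] {g : ℂ → E} (hg : Continuous g) : Integrable g μ := by
  have h := hg.continuousOn.integrableOn_compact (μ := μ) hc
  rwa [IntegrableOn, restrict_msupp] at h

lemma eval_cont (P Q : Polynomial ℂ) :
    Continuous fun z => P.eval z * (starRingEnd ℂ) (Q.eval z) :=
  (P.continuous).mul (continuous_star.comp Q.continuous)

lemma onp_pair (μ : Measure ℂ) [IsFiniteMeasure μ] (hc : IsCompact (msupp μ))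
    (p : ℕ → Polynomial ℂ) (hp : ONP μ p) (n : ℕ) :
    ∀ q : Polynomial ℂ, q.natDegree ≤ n →
      ∫ z, (p n).eval z * (starRingEnd ℂ) (q.eval z) ∂μ
        = starRingEnd ℂ (q.coeff n / (p n).leadingCoeff) := by
  obtain ⟨hdeg, hlc, hint⟩ := hp
  have hlcne : ∀ m, (p m).leadingCoeff ≠ 0 := by
    intro m h
    have := (hlc m).1
    rw [h] at this; simp at this
  suffices H : ∀ d : ℕ, ∀ q : Polynomial ℂ, q.natDegree ≤ d → q.natDegree ≤ n →
      ∫ z, (p n).eval z * (starRingEnd ℂ) (q.eval z) ∂μ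
        = starRingEnd ℂ (q.coeff n / (p n).leadingCoeff) by
    intro q hq; exact H q.natDegree q le_rfl hq
  intro d
  induction d using Nat.strong_induction_on with
  | _ d ih =>
    intro q hqd hqn
    by_cases hq0 : q = 0
    · simp [hq0]
    obtain ⟨m, hm⟩ : ∃ m, q.natDegree = m := ⟨q.natDegree, rfl⟩
    rw [hm] at hqd hqn
    set c : ℂ := q.leadingCoeff / (p m).leadingCoeff with hcdef
    set r : Polynomial ℂ := q - Polynomial.C c * p m with hrdef
    have hpm : (p m).coeff m = (p m).leadingCoeff := by
      rw [Polynomial.leadingCoeff, hdeg m]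
    have hqm : q.coeff m = q.leadingCoeff := by
      rw [Polynomial.leadingCoeff, hm]
    have hq_eq : q = Polynomial.C c * p m + r := by rw [hrdef]; ring
    have hrm : r.coeff m = 0 := by
      rw [hrdef]
      simp only [Polynomial.coeff_sub, Polynomial.coeff_C_mul, hpm, hqm]
      rw [hcdef, div_mul_cancel₀ _ (hlcne m), sub_self]
    have hrle : r.natDegree ≤ m := by
      refine le_trans (Polynomial.natDegree_sub_le _ _) (max_le hm.le ?_)
      exact le_trans (Polynomial.natDegree_C_mul_le _ _) (le_of_eq (hdeg m))
    have hrcases : r = 0 ∨ r.natDegree < m := by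
      by_cases h : r = 0
      · exact Or.inl h
      · right
        rcases lt_or_eq_of_le hrle with h' | h'
        · exact h'
        · exact absurd (by rw [Polynomial.leadingCoeff, h', hrm])
            (Polynomial.leadingCoeff_ne_zero.2 h)
    have hi1 : Integrable (fun z => (p n).eval z * (starRingEnd ℂ) ((p m).eval z)) μ :=
      integrable_cont μ hc (eval_cont _ _)
    have hi2 : Integrable (fun z => (p n).eval z * (starRingEnd ℂ) (r.eval z)) μ :=
      integrable_cont μ hc (eval_cont _ _)
    have hsplit : ∫ z, (p n).eval z * (starRingEnd ℂ) (q.eval z) ∂μ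
        = (starRingEnd ℂ c) * (∫ z, (p n).eval z * (starRingEnd ℂ) ((p m).eval z) ∂μ)
          + ∫ z, (p n).eval z * (starRingEnd ℂ) (r.eval z) ∂μ := by
      have heq : (fun z => (p n).eval z * (starRingEnd ℂ) (q.eval z))
          = fun z => (starRingEnd ℂ c) * ((p n).eval z * (starRingEnd ℂ) ((p m).eval z))
              + (p n).eval z * (starRingEnd ℂ) (r.eval z) := by
        funext z
        conv_lhs => rw [hq_eq]
        simp only [Polynomial.eval_add, Polynomial.eval_mul, Polynomial.eval_C, map_add,
          map_mul]
        ring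
      rw [heq, integral_add (hi1.const_mul ((starRingEnd ℂ) c)) hi2, integral_const_mul]
    have hrint : ∫ z, (p n).eval z * (starRingEnd ℂ) (r.eval z) ∂μ
        = starRingEnd ℂ (r.coeff n / (p n).leadingCoeff) := by
      rcases hrcases with h | h
      · simp [h]
      · exact ih r.natDegree (lt_of_lt_of_le h hqd) r le_rfl (le_trans (le_of_lt h) hqn)
    rw [hsplit, hint n m, hrint]
    have hqc : q.coeff n = c * (p m).coeff n + r.coeff n := by
      conv_lhs => rw [hq_eq]
      simp [Polynomial.coeff_add, Polynomial.coeff_C_mul]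
    by_cases hmn : m = n
    · subst hmn
      rw [if_pos rfl, hqc, hpm, hrm]
      rw [hcdef, div_mul_cancel₀ _ (hlcne m)]
      simp [hqm]
    · have hnm : n ≠ m := fun h => hmn h.symm
      rw [if_neg hnm, mul_zero, zero_add, hqc]
      have hpmn : (p m).coeff n = 0 := by
        apply Polynomial.coeff_eq_zero_of_natDegree_lt
        rw [hdeg m]
        exact lt_of_le_of_ne hqn hmn
      rw [hpmn, mul_zero, zero_add]

/-- `‖p_n(μ₀,·) − p_n(μ₁,·)‖²_{L²(μ₀)} = ‖p_n(μ₁,·)‖²_{L²(μ₂)} − 2β_n`. -/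
theorem stmt_8 (μ0 μ1 μ2 : Measure ℂ) [IsFiniteMeasure μ1] [IsFiniteMeasure μ2]
    (hsum : μ0 = μ1 + μ2) (hle : μ1 ≤ μ0)
    (h0c : IsCompact (msupp μ0)) (h0i : (msupp μ0).Infinite)
    (h1c : IsCompact (msupp μ1)) (h1i : (msupp μ1).Infinite)
    (p0 p1 : ℕ → Polynomial ℂ) (hp0 : ONP μ0 p0) (hp1 : ONP μ1 p1)
    (β : ℕ → ℝ)
    (hβ : ∀ n, β n = ((p1 n).leadingCoeff).re / ((p0 n).leadingCoeff).re - 1) :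
    ∀ n : ℕ,
      (∫ z, ‖(p0 n).eval z - (p1 n).eval z‖ ^ 2 ∂μ0)
        = (∫ z, ‖(p1 n).eval z‖ ^ 2 ∂μ2) - 2 * β n := by
  haveI hf0 : IsFiniteMeasure μ0 := by rw [hsum]; infer_instance
  have hμ2le : μ2 ≤ μ0 := by rw [hsum]; exact Measure.le_add_left le_rfl
  intro n
  -- leading coefficients are real
  have hlc0 : ((p0 n).leadingCoeff : ℂ) = ((((p0 n).leadingCoeff).re : ℝ) : ℂ) :=
    Complex.ext rfl (by simp [(hp0.2.1 n).2])
  have hlc1 : ((p1 n).leadingCoeff : ℂ) = ((((p1 n).leadingCoeff).re : ℝ) : ℂ) :=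
    Complex.ext rfl (by simp [(hp1.2.1 n).2])
  have hlc0ne : ((p0 n).leadingCoeff).re ≠ 0 := ne_of_gt (hp0.2.1 n).1
  -- key inner products
  have key00 : ∫ z, (p0 n).eval z * (starRingEnd ℂ) ((p0 n).eval z) ∂μ0 = 1 := by
    simpa using hp0.2.2 n n
  have key11 : ∫ z, (p1 n).eval z * (starRingEnd ℂ) ((p1 n).eval z) ∂μ1 = 1 := by
    simpa using hp1.2.2 n n
  have key01 : ∫ z, (p0 n).eval z * (starRingEnd ℂ) ((p1 n).eval z) ∂μ0
      = (((1 + β n : ℝ)) : ℂ) := by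
    have h := onp_pair μ0 h0c p0 hp0 n (p1 n) (le_of_eq (hp1.1 n))
    have hcoe : (p1 n).coeff n = (p1 n).leadingCoeff := by
      rw [Polynomial.leadingCoeff, hp1.1 n]
    rw [h, hcoe, hlc0, hlc1]
    rw [show ((((p1 n).leadingCoeff).re : ℝ) : ℂ) / ((((p0 n).leadingCoeff).re : ℝ) : ℂ)
        = (((((p1 n).leadingCoeff).re / ((p0 n).leadingCoeff).re : ℝ)) : ℂ) by push_cast; ring]
    rw [Complex.conj_ofReal]
    congr 1
    rw [hβ n]; ring
  -- integrability
  have i00c : Integrable (fun z => (p0 n).eval z * (starRingEnd ℂ) ((p0 n).eval z)) μ0 :=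
    integrable_cont μ0 h0c (eval_cont _ _)
  have i11c : Integrable (fun z => (p1 n).eval z * (starRingEnd ℂ) ((p1 n).eval z)) μ0 :=
    integrable_cont μ0 h0c (eval_cont _ _)
  have i01c : Integrable (fun z => (p0 n).eval z * (starRingEnd ℂ) ((p1 n).eval z)) μ0 :=
    integrable_cont μ0 h0c (eval_cont _ _)
  have iA : Integrable (fun z => ((p0 n).eval z * (starRingEnd ℂ) ((p0 n).eval z)).re) μ0 :=
    integrable_cont μ0 h0c (Complex.continuous_re.comp (eval_cont _ _))
  have iB : Integrable (fun z => ((p1 n).eval z * (starRingEnd ℂ) ((p1 n).eval z)).re) μ0 :=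
    integrable_cont μ0 h0c (Complex.continuous_re.comp (eval_cont _ _))
  have iC : Integrable (fun z => ((p0 n).eval z * (starRingEnd ℂ) ((p1 n).eval z)).re) μ0 :=
    integrable_cont μ0 h0c (Complex.continuous_re.comp (eval_cont _ _))
  -- values of real integrals
  have hA : ∫ z, ((p0 n).eval z * (starRingEnd ℂ) ((p0 n).eval z)).re ∂μ0 = 1 := by
    have h := integral_re i00c
    rw [key00] at h
    simpa using h
  have hC : ∫ z, ((p0 n).eval z * (starRingEnd ℂ) ((p1 n).eval z)).re ∂μ0 = 1 + β n := by
    have h := integral_re i01c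
    rw [key01] at h
    simpa using h
  have hB1 : ∫ z, ((p1 n).eval z * (starRingEnd ℂ) ((p1 n).eval z)).re ∂μ1 = 1 := by
    have h := integral_re (μ := μ1) (i11c.mono_measure hle)
    rw [key11] at h
    simpa using h
  have habs1 : ∀ z : ℂ, ((p1 n).eval z * (starRingEnd ℂ) ((p1 n).eval z)).re
      = ‖(p1 n).eval z‖ ^ 2 := by
    intro z
    rw [Complex.mul_conj, Complex.sq_norm]
    simp
  have hB : ∫ z, ((p1 n).eval z * (starRingEnd ℂ) ((p1 n).eval z)).re ∂μ0
      = 1 + ∫ z, ‖(p1 n).eval z‖ ^ 2 ∂μ2 := by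
    rw [hsum, integral_add_measure (iB.mono_measure hle) (iB.mono_measure hμ2le), hB1]
    congr 1
    exact integral_congr_ae (Filter.Eventually.of_forall fun z => habs1 z)
  -- pointwise expansion
  have habs : ∀ z : ℂ, ‖(p0 n).eval z - (p1 n).eval z‖ ^ 2
      = ((p0 n).eval z * (starRingEnd ℂ) ((p0 n).eval z)).re
        + ((p1 n).eval z * (starRingEnd ℂ) ((p1 n).eval z)).re
        - 2 * ((p0 n).eval z * (starRingEnd ℂ) ((p1 n).eval z)).re := by
    intro z
    simp only [Complex.sq_norm, Complex.normSq_apply, Complex.mul_re, Complex.sub_re,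
      Complex.sub_im, Complex.conj_re, Complex.conj_im]
    ring
  calc (∫ z, ‖(p0 n).eval z - (p1 n).eval z‖ ^ 2 ∂μ0)
      = ∫ z, (((p0 n).eval z * (starRingEnd ℂ) ((p0 n).eval z)).re
          + ((p1 n).eval z * (starRingEnd ℂ) ((p1 n).eval z)).re
          - 2 * ((p0 n).eval z * (starRingEnd ℂ) ((p1 n).eval z)).re) ∂μ0 := by
        exact integral_congr_ae (Filter.Eventually.of_forall fun z => habs z)
    _ = (∫ z, ((p0 n).eval z * (starRingEnd ℂ) ((p0 n).eval z)).re ∂μ0)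
          + (∫ z, ((p1 n).eval z * (starRingEnd ℂ) ((p1 n).eval z)).re ∂μ0)
          - 2 * ∫ z, ((p0 n).eval z * (starRingEnd ℂ) ((p1 n).eval z)).re ∂μ0 := by
        have iAB : Integrable (fun z => ((p0 n).eval z * (starRingEnd ℂ) ((p0 n).eval z)).re
            + ((p1 n).eval z * (starRingEnd ℂ) ((p1 n).eval z)).re) μ0 := iA.add iB
        have iC2 : Integrable (fun z =>
            2 * ((p0 n).eval z * (starRingEnd ℂ) ((p1 n).eval z)).re) μ0 := iC.const_mul 2
        rw [integral_sub iAB iC2, integral_add iA iB, integral_const_mul]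
    _ = (∫ z, ‖(p1 n).eval z‖ ^ 2 ∂μ2) - 2 * β n := by
        rw [hA, hB, hC]; ring
end
end

section
/- If μ₀ is a polynomially small perturbation of μ₁, i.e. μ₀ = μ₁ + μ₂ (μ₂ ≠ 0) and ‖p_n(μ₁,·)‖_{L²(μ₂)} → 0 as n → ∞, then the ratio of leading coefficients satisfies γ_n(μ₁)/γ_n(μ₀) → 1 as n → ∞. -/
open MeasureTheory Polynomial Filter

noncomputable section

lemma integrable_aux {μ0 ν : Measure ℂ} [IsFiniteMeasure μ0]
    (hν : ν ≤ μ0) (hc : IsCompact (msupp μ0)) {E : Type*} [NormedAddCommGroup E]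
    {f : ℂ → E} (hf : Continuous f) : Integrable f ν := by
  have hfin : IsFiniteMeasure ν :=
    ⟨lt_of_le_of_lt (Measure.le_iff'.mp hν Set.univ) (measure_lt_top μ0 _)⟩
  obtain ⟨C, hC⟩ := hc.exists_bound_of_continuousOn hf.continuousOn
  have hnull : ν (msupp μ0)ᶜ = 0 :=
    le_antisymm ((Measure.le_iff'.mp hν _).trans (msupp_compl_null μ0).le) (by simp)
  have hae : ∀ᵐ z ∂ν, ‖f z‖ ≤ C := by
    refine ae_iff.mpr (measure_mono_null (fun z hz => ?_) hnull)
    simp only [Set.mem_setOf_eq] at hz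
    exact fun hmem => hz (hC z hmem)
  exact (integrable_const C).mono' hf.aestronglyMeasurable hae

lemma expand_aux (p : ℕ → Polynomial ℂ) (hdeg : ∀ k, (p k).natDegree = k)
    (hne : ∀ k, (p k).coeff k ≠ 0) :
    ∀ n (q : Polynomial ℂ), q.natDegree ≤ n →
      ∃ c : ℕ → ℂ, q = ∑ k ∈ Finset.range (n + 1), c k • p k ∧
        c n = q.coeff n / (p n).coeff n := by
  intro n
  induction n with
  | zero =>
    intro q hq
    refine ⟨fun _ => q.coeff 0 / (p 0).coeff 0, ?_, rfl⟩
    rw [Finset.range_one, Finset.sum_singleton]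
    have h0 := Polynomial.eq_C_of_natDegree_le_zero hq
    have h1 := Polynomial.eq_C_of_natDegree_le_zero (le_of_eq (hdeg 0))
    rw [h0, h1]
    simp only [Polynomial.coeff_C_zero]
    rw [Polynomial.smul_C, smul_eq_mul, div_mul_cancel₀ _ (hne 0)]
  | succ n ih =>
    intro q hq
    set a : ℂ := q.coeff (n + 1) / (p (n + 1)).coeff (n + 1) with ha
    have hq' : (q - a • p (n + 1)).natDegree ≤ n := by
      rw [Polynomial.natDegree_le_iff_coeff_eq_zero]
      intro m hm
      rcases eq_or_lt_of_le (Nat.succ_le_of_lt hm) with h | h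
      · rw [Polynomial.coeff_sub, Polynomial.coeff_smul, ← h, smul_eq_mul, ha,
          div_mul_cancel₀ _ (hne (n + 1)), sub_self]
      · have h1 : q.coeff m = 0 :=
          Polynomial.coeff_eq_zero_of_natDegree_lt (lt_of_le_of_lt hq h)
        have h2 : (p (n + 1)).coeff m = 0 :=
          Polynomial.coeff_eq_zero_of_natDegree_lt (by rw [hdeg]; exact h)
        rw [Polynomial.coeff_sub, Polynomial.coeff_smul, h1, h2, smul_zero, sub_zero]
    obtain ⟨c, hc, -⟩ := ih _ hq'
    refine ⟨fun k => if k = n + 1 then a else c k, ?_, by simp⟩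
    have hcongr : ∀ k ∈ Finset.range (n + 1),
        (if k = n + 1 then a else c k) • p k = c k • p k := by
      intro k hk; rw [if_neg (Finset.mem_range.mp hk).ne]
    rw [Finset.sum_range_succ, Finset.sum_congr rfl hcongr, ← hc]
    simp


lemma my_integral_ofReal {μ : Measure ℂ} {f : ℂ → ℝ} :
    ∫ x, ((f x : ℝ) : ℂ) ∂μ = ((∫ x, f x ∂μ : ℝ) : ℂ) := integral_ofReal

lemma parseval_aux {μ : Measure ℂ}
    (hint : ∀ f : ℂ → ℂ, Continuous f → Integrable f μ)
    (p : ℕ → Polynomial ℂ)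
    (horth : ∀ m k, ∫ z, (p m).eval z * (starRingEnd ℂ) ((p k).eval z) ∂μ
      = if m = k then 1 else 0)
    (N : ℕ) (c : ℕ → ℂ) :
    ∫ z, ‖(∑ k ∈ Finset.range N, c k • p k).eval z‖ ^ 2 ∂μ
      = ∑ k ∈ Finset.range N, ‖c k‖ ^ 2 := by
  set q := ∑ k ∈ Finset.range N, c k • p k with hq
  have key : ∫ z, (q.eval z) * (starRingEnd ℂ) (q.eval z) ∂μ
      = ∑ j ∈ Finset.range N, ∑ k ∈ Finset.range N,
          (c j * (starRingEnd ℂ) (c k)) *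
            ∫ z, (p j).eval z * (starRingEnd ℂ) ((p k).eval z) ∂μ := by
    have heval : ∀ z, q.eval z * (starRingEnd ℂ) (q.eval z)
        = ∑ j ∈ Finset.range N, ∑ k ∈ Finset.range N,
            (c j * (starRingEnd ℂ) (c k)) *
              ((p j).eval z * (starRingEnd ℂ) ((p k).eval z)) := by
      intro z
      rw [hq, Polynomial.eval_finset_sum, map_sum, Finset.sum_mul_sum]
      refine Finset.sum_congr rfl fun j _ => Finset.sum_congr rfl fun k _ => ?_
      simp only [Polynomial.eval_smul, smul_eq_mul, map_mul]
      ring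
    simp only [heval]
    rw [integral_finset_sum _ (fun j _ => integrable_finset_sum _ (fun k _ =>
      ((hint _ (by continuity)).const_mul _)))]
    refine Finset.sum_congr rfl fun j _ => ?_
    rw [integral_finset_sum _ (fun k _ => ((hint _ (by continuity)).const_mul _))]
    exact Finset.sum_congr rfl fun k _ => integral_const_mul _ _
  have inner : ∀ j ∈ Finset.range N,
      (∑ k ∈ Finset.range N, (c j * (starRingEnd ℂ) (c k)) *
        (if j = k then (1 : ℂ) else 0)) = ((‖c j‖ ^ 2 : ℝ) : ℂ) := by
    intro j hj
    rw [Finset.sum_eq_single j]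
    · rw [if_pos rfl, mul_one, Complex.mul_conj, Complex.normSq_eq_norm_sq]
    · intro k _ hk
      rw [if_neg (fun h => hk h.symm), mul_zero]
    · intro h; exact absurd hj h
  have hmain : ((∫ z, ‖q.eval z‖ ^ 2 ∂μ : ℝ) : ℂ)
      = ((∑ k ∈ Finset.range N, ‖c k‖ ^ 2 : ℝ) : ℂ) := by
    rw [← my_integral_ofReal]
    have : ∀ z, ((‖q.eval z‖ ^ 2 : ℝ) : ℂ)
        = q.eval z * (starRingEnd ℂ) (q.eval z) := by
      intro z; rw [Complex.mul_conj, Complex.sq_norm]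
    simp_rw [this]
    rw [key]
    simp_rw [horth]
    rw [Finset.sum_congr rfl inner]
    push_cast
    ring
  exact_mod_cast hmain

lemma norm_one_aux {μ : Measure ℂ} (p : Polynomial ℂ)
    (h : ∫ z, p.eval z * (starRingEnd ℂ) (p.eval z) ∂μ = 1) :
    ∫ z, ‖p.eval z‖ ^ 2 ∂μ = 1 := by
  have hmain : ((∫ z, ‖p.eval z‖ ^ 2 ∂μ : ℝ) : ℂ) = 1 := by
    rw [← my_integral_ofReal, ← h]
    refine integral_congr_ae (Filter.Eventually.of_forall fun z => ?_)
    simp only []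
    rw [Complex.mul_conj, Complex.sq_norm]
  exact_mod_cast hmain

/-- If `μ₀` is a PS perturbation of `μ₁`, then `γ_n(μ₁)/γ_n(μ₀) → 1`. -/
theorem stmt_10 (μ0 μ1 μ2 : Measure ℂ) [IsFiniteMeasure μ1] [IsFiniteMeasure μ2]
    (hsum : μ0 = μ1 + μ2) (hμ2 : μ2 ≠ 0)
    (h0c : IsCompact (msupp μ0)) (h0i : (msupp μ0).Infinite)
    (h1c : IsCompact (msupp μ1)) (h1i : (msupp μ1).Infinite)
    (p0 p1 : ℕ → Polynomial ℂ) (hp0 : ONP μ0 p0) (hp1 : ONP μ1 p1)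
    (hPS : Tendsto (fun n => ∫ z, ‖(p1 n).eval z‖ ^ 2 ∂μ2) atTop (nhds 0)) :
    Tendsto (fun n => ((p1 n).leadingCoeff).re / ((p0 n).leadingCoeff).re)
      atTop (nhds 1) := by
  classical
  obtain ⟨hdeg0, hlc0, horth0⟩ := hp0
  obtain ⟨hdeg1, hlc1, horth1⟩ := hp1
  haveI hfin0 : IsFiniteMeasure μ0 := by rw [hsum]; infer_instance
  have h1le : μ1 ≤ μ0 := by rw [hsum]; exact Measure.le_add_right le_rfl
  have h2le : μ2 ≤ μ0 := by rw [hsum]; exact Measure.le_add_left le_rfl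
  have hint0 : ∀ f : ℂ → ℂ, Continuous f → Integrable f μ0 :=
    fun f hf => integrable_aux le_rfl h0c hf
  have hint1 : ∀ f : ℂ → ℂ, Continuous f → Integrable f μ1 :=
    fun f hf => integrable_aux h1le h0c hf
  set γ0 : ℕ → ℝ := fun n => ((p0 n).leadingCoeff).re with hγ0
  set γ1 : ℕ → ℝ := fun n => ((p1 n).leadingCoeff).re with hγ1
  have hγ0pos : ∀ n, 0 < γ0 n := fun n => (hlc0 n).1
  have hγ1pos : ∀ n, 0 < γ1 n := fun n => (hlc1 n).1
  have hcoeff0 : ∀ n, (p0 n).coeff n = ((γ0 n : ℝ) : ℂ) := by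
    intro n
    have hc : (p0 n).coeff n = (p0 n).leadingCoeff := by
      rw [Polynomial.leadingCoeff, hdeg0 n]
    rw [hc]
    exact Complex.ext (by simp [hγ0]) (by simp [(hlc0 n).2])
  have hcoeff1 : ∀ n, (p1 n).coeff n = ((γ1 n : ℝ) : ℂ) := by
    intro n
    have hc : (p1 n).coeff n = (p1 n).leadingCoeff := by
      rw [Polynomial.leadingCoeff, hdeg1 n]
    rw [hc]
    exact Complex.ext (by simp [hγ1]) (by simp [(hlc1 n).2])
  have hne0 : ∀ n, (p0 n).coeff n ≠ 0 := by
    intro n; rw [hcoeff0 n]; exact_mod_cast (hγ0pos n).ne'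
  have hne1 : ∀ n, (p1 n).coeff n ≠ 0 := by
    intro n; rw [hcoeff1 n]; exact_mod_cast (hγ1pos n).ne'
  -- continuity of |P|^2
  have hcont : ∀ P : Polynomial ℂ, Continuous (fun z => ‖P.eval z‖ ^ 2) :=
    fun P => (continuous_norm.comp P.continuous_aeval).pow 2
  set ε : ℕ → ℝ := fun n => ∫ z, ‖(p1 n).eval z‖ ^ 2 ∂μ2 with hε
  have hεnonneg : ∀ n, 0 ≤ ε n :=
    fun n => integral_nonneg fun z => sq_nonneg _
  -- inequality (a): (γ1 n / γ0 n)^2 ≤ 1 + ε n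
  have ha : ∀ n, (γ1 n / γ0 n) ^ 2 ≤ 1 + ε n := by
    intro n
    obtain ⟨c, hcrep, hcn⟩ := expand_aux p0 hdeg0 hne0 n (p1 n) (le_of_eq (hdeg1 n))
    have hpar := parseval_aux hint0 p0 horth0 (n + 1) c
    rw [← hcrep] at hpar
    have hcnval : ‖c n‖ = γ1 n / γ0 n := by
      rw [hcn, hcoeff0 n, hcoeff1 n, ← Complex.ofReal_div, Complex.norm_real, Real.norm_eq_abs,
        abs_of_pos (div_pos (hγ1pos n) (hγ0pos n))]
    have hge : (γ1 n / γ0 n) ^ 2 ≤ ∫ z, ‖(p1 n).eval z‖ ^ 2 ∂μ0 := by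
      rw [hpar, ← hcnval]
      exact Finset.single_le_sum (fun k _ => sq_nonneg (‖c k‖))
        (Finset.self_mem_range_succ n)
    have hsplit : ∫ z, ‖(p1 n).eval z‖ ^ 2 ∂μ0 = 1 + ε n := by
      rw [hsum, integral_add_measure
        (integrable_aux h1le h0c (hcont (p1 n)))
        (integrable_aux h2le h0c (hcont (p1 n)))]
      congr 1
      exact norm_one_aux (p1 n) (by simpa using horth1 n n)
    rw [hsplit] at hge
    exact hge
  -- inequality (b): 1 ≤ γ1 n / γ0 n
  have hb : ∀ n, 1 ≤ γ1 n / γ0 n := by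
    intro n
    obtain ⟨d, hdrep, hdn⟩ := expand_aux p1 hdeg1 hne1 n (p0 n) (le_of_eq (hdeg0 n))
    have hpar := parseval_aux hint1 p1 horth1 (n + 1) d
    rw [← hdrep] at hpar
    have hdnval : ‖d n‖ = γ0 n / γ1 n := by
      rw [hdn, hcoeff0 n, hcoeff1 n, ← Complex.ofReal_div, Complex.norm_real, Real.norm_eq_abs,
        abs_of_pos (div_pos (hγ0pos n) (hγ1pos n))]
    have hge : (γ0 n / γ1 n) ^ 2 ≤ ∫ z, ‖(p0 n).eval z‖ ^ 2 ∂μ1 := by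
      rw [hpar, ← hdnval]
      exact Finset.single_le_sum (fun k _ => sq_nonneg (‖d k‖))
        (Finset.self_mem_range_succ n)
    have hmono : ∫ z, ‖(p0 n).eval z‖ ^ 2 ∂μ1
        ≤ ∫ z, ‖(p0 n).eval z‖ ^ 2 ∂μ0 :=
      integral_mono_measure h1le (Filter.Eventually.of_forall fun z => sq_nonneg _)
        (integrable_aux le_rfl h0c (hcont (p0 n)))
    have hone : ∫ z, ‖(p0 n).eval z‖ ^ 2 ∂μ0 = 1 :=
      norm_one_aux (p0 n) (by simpa using horth0 n n)
    have hle1 : (γ0 n / γ1 n) ^ 2 ≤ 1 := by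
      calc (γ0 n / γ1 n) ^ 2 ≤ _ := hge
        _ ≤ _ := hmono
        _ = 1 := hone
    have hpos : 0 < γ0 n / γ1 n := div_pos (hγ0pos n) (hγ1pos n)
    have : γ0 n / γ1 n ≤ 1 := by nlinarith
    rw [le_div_iff₀ (hγ0pos n)]
    rw [div_le_one (hγ1pos n)] at this
    linarith
  -- squeeze
  have hub : ∀ n, γ1 n / γ0 n ≤ Real.sqrt (1 + ε n) := by
    intro n
    rw [Real.le_sqrt (div_pos (hγ1pos n) (hγ0pos n)).le (by linarith [hεnonneg n])]
    exact ha n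
  have hsqrt : Tendsto (fun n => Real.sqrt (1 + ε n)) atTop (nhds 1) := by
    have h1 : Tendsto (fun n => 1 + ε n) atTop (nhds (1 + 0)) :=
      tendsto_const_nhds.add hPS
    have h2 := (Real.continuous_sqrt.tendsto (1 + 0)).comp h1
    simpa [Function.comp_def] using h2
  exact tendsto_of_tendsto_of_tendsto_of_le_of_le tendsto_const_nhds hsqrt hb hub
end
end

section
/- All zeros of the n-th orthonormal polynomial p_n(μ, ·) with respect to a finite Borel measure μ with compact infinite support S in ℂ lie in the convex hull Co(S) of S (Fejér's theorem). -/
open MeasureTheory Polynomial Filter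

noncomputable section

lemma ae_mem_msupp (μ : Measure ℂ) : ∀ᵐ z ∂μ, z ∈ msupp μ :=
  (ae_iff.mpr (by exact msupp_compl_null μ))

/-- Any continuous function is integrable w.r.t. a finite measure with compact support. -/
lemma integrable_of_continuous (μ : Measure ℂ) [IsFiniteMeasure μ]
    (hc : IsCompact (msupp μ)) {E : Type*} [NormedAddCommGroup E]
    {f : ℂ → E} (hf : Continuous f) : Integrable f μ := by
  rw [← Measure.restrict_eq_self_of_ae_mem (ae_mem_msupp μ)]
  exact ContinuousOn.integrableOn_compact hc hf.continuousOn

/-- A nonnegative continuous function which is nonzero somewhere on the support of `μ`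
has positive integral. -/
lemma pos_integral {μ : Measure ℂ} [IsFiniteMeasure μ]
    {g : ℂ → ℝ} (hg : Continuous g) (hg0 : ∀ t, 0 ≤ g t)
    (hgi : Integrable g μ) {w : ℂ} (hw : ∀ U ∈ nhds w, μ U ≠ 0) (hgw : g w ≠ 0) :
    0 < ∫ t, g t ∂μ := by
  rcases (integral_nonneg (f := g) hg0).lt_or_eq with h | h
  · exact h
  exfalso
  have hz : g =ᶠ[ae μ] 0 := (integral_eq_zero_iff_of_nonneg hg0 hgi).mp h.symm
  have hU : IsOpen {t | g t ≠ 0} := isOpen_ne.preimage hg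
  have hnull : μ {t | g t ≠ 0} = 0 := by
    have h' := hz
    rw [EventuallyEq, ae_iff] at h'
    simpa using h'
  exact hw _ (hU.mem_nhds hgw) hnull

/-- The convex hull of a compact subset of `ℂ` is closed (via Carathéodory). -/
lemma isClosed_hull {S : Set ℂ} (hS : IsCompact S) :
    IsClosed (convexHull ℝ S) := by
  classical
  set f : ℂ × ℂ × ℂ × ℝ × ℝ → ℂ := fun x =>
    (1 - x.2.2.2.1) • x.1 + x.2.2.2.1 • ((1 - x.2.2.2.2) • x.2.1 + x.2.2.2.2 • x.2.2.1) with hf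
  set D : Set (ℂ × ℂ × ℂ × ℝ × ℝ) := S ×ˢ S ×ˢ S ×ˢ Set.Icc 0 1 ×ˢ Set.Icc 0 1 with hD
  have hcont : Continuous f := by fun_prop
  have hDcomp : IsCompact D := hS.prod (hS.prod (hS.prod (isCompact_Icc.prod isCompact_Icc)))
  have key : convexHull ℝ S = f '' D := by
    apply Set.Subset.antisymm
    · intro x hx
      rw [convexHull_eq_union] at hx
      simp only [Set.mem_iUnion, exists_prop] at hx
      obtain ⟨t, htS, htind, hxt⟩ := hx
      have htcard : t.card ≤ 3 := by
        have h1 := htind.card_le_finrank_succ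
        have h2 : Module.finrank ℝ (vectorSpan ℝ (Set.range ((↑) : t → ℂ))) ≤ 2 := by
          rw [← Complex.finrank_real_complex]
          exact Submodule.finrank_le _
        rw [Fintype.card_coe] at h1
        omega
      have htne : t.Nonempty := by
        by_contra h
        rw [Finset.not_nonempty_iff_eq_empty] at h
        subst h
        simp at hxt
      obtain ⟨a, b, c, habc, haS, hbS, hcS⟩ :
          ∃ a b c : ℂ, (↑t : Set ℂ) ⊆ ({a, b, c} : Set ℂ) ∧ a ∈ S ∧ b ∈ S ∧ c ∈ S := by
        interval_cases h : t.card
        · have := htne.card_pos; omega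
        · obtain ⟨a, rfl⟩ := Finset.card_eq_one.mp h
          exact ⟨a, a, a, by simp, htS (by simp), htS (by simp), htS (by simp)⟩
        · obtain ⟨a, b, _, rfl⟩ := Finset.card_eq_two.mp h
          exact ⟨a, b, b, by simp [Set.subset_def], htS (by simp), htS (by simp), htS (by simp)⟩
        · obtain ⟨a, b, c, _, _, _, rfl⟩ := Finset.card_eq_three.mp h
          refine ⟨a, b, c, by simp [Set.subset_def], htS (by simp), htS (by simp), htS (by simp)⟩
      have hx3 : x ∈ convexHull ℝ ({a, b, c} : Set ℂ) := convexHull_mono habc hxt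
      rw [show ({a, b, c} : Set ℂ) = insert a {b, c} from rfl,
        convexHull_insert ⟨b, by simp⟩, convexHull_pair] at hx3
      rw [mem_convexJoin] at hx3
      obtain ⟨a', ha', z, hz, hxz⟩ := hx3
      rw [Set.mem_singleton_iff] at ha'
      subst ha'
      rw [segment_eq_image] at hz hxz
      obtain ⟨v, hv, rfl⟩ := hz
      obtain ⟨u, hu, rfl⟩ := hxz
      exact ⟨(a', b, c, u, v), ⟨haS, hbS, hcS, hu, hv⟩, rfl⟩
    · rintro x ⟨⟨a, b, c, u, v⟩, ⟨ha, hb, hc, hu, hv⟩, rfl⟩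
      have hmem := convex_convexHull ℝ S
      have hbc : (1 - v) • b + v • c ∈ convexHull ℝ S :=
        hmem (subset_convexHull ℝ S hb) (subset_convexHull ℝ S hc)
          (by linarith [hv.2]) hv.1 (by ring)
      exact hmem (subset_convexHull ℝ S ha) hbc (by linarith [hu.2]) hu.1 (by ring)
  rw [key]
  exact (hDcomp.image hcont).isClosed

lemma integrable_poly_mul_conj (μ : Measure ℂ) [IsFiniteMeasure μ]
    (hc : IsCompact (msupp μ)) (r s : Polynomial ℂ) :
    Integrable (fun t => r.eval t * (starRingEnd ℂ) (s.eval t)) μ :=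
  integrable_of_continuous μ hc (r.continuous.mul (Complex.continuous_conj.comp s.continuous))

/-- `p n` is orthogonal to every polynomial of degree less than `n`. -/
lemma orth (μ : Measure ℂ) [IsFiniteMeasure μ] (hc : IsCompact (msupp μ))
    (p : ℕ → Polynomial ℂ) (hp : ONP μ p) (n : ℕ) :
    ∀ (r : Polynomial ℂ), r.natDegree < n →
      ∫ t, r.eval t * (starRingEnd ℂ) ((p n).eval t) ∂μ = 0 := by
  obtain ⟨hdeg, hlc, hint⟩ := hp
  have hpne : ∀ k, (p k) ≠ 0 := by
    intro k hk
    have := (hlc k).1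
    rw [hk] at this
    simp at this
  have hlcne : ∀ k, (p k).leadingCoeff ≠ 0 := fun k hk => by
    have := (hlc k).1; rw [hk] at this; simp at this
  suffices H : ∀ K : ℕ, ∀ (r : Polynomial ℂ), r.natDegree ≤ K → r.natDegree < n →
      ∫ t, r.eval t * (starRingEnd ℂ) ((p n).eval t) ∂μ = 0 by
    exact fun r hr => H r.natDegree r le_rfl hr
  intro K
  induction K with
  | zero =>
    intro r hr0 hrn
    rcases eq_or_ne r 0 with rfl | hne
    · simp
    have hr : r = C (r.coeff 0) := eq_C_of_natDegree_le_zero hr0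
    have hn0 : (0:ℕ) < n := hrn.trans_le' (Nat.zero_le _)
    have hp0 : p 0 = C ((p 0).leadingCoeff) := by
      have h0 : (p 0).leadingCoeff = (p 0).coeff 0 := by
        rw [leadingCoeff, hdeg 0]
      rw [h0]
      exact eq_C_of_natDegree_le_zero (le_of_eq (hdeg 0))
    set c : ℂ := r.coeff 0 / (p 0).leadingCoeff with hcdef
    have hrc : r = C c * p 0 := by
      rw [hp0, ← C_mul, hcdef, div_mul_cancel₀ _ (hlcne 0)]
      exact hr
    calc ∫ t, r.eval t * (starRingEnd ℂ) ((p n).eval t) ∂μ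
        = ∫ t, c * ((p 0).eval t * (starRingEnd ℂ) ((p n).eval t)) ∂μ := by
          congr 1; ext t; rw [hrc]; simp; ring
      _ = c * ∫ t, (p 0).eval t * (starRingEnd ℂ) ((p n).eval t) ∂μ := integral_const_mul _ _
      _ = 0 := by rw [hint 0 n, if_neg (by omega)]; ring
  | succ K ih =>
    intro r hr0 hrn
    rcases eq_or_ne r 0 with rfl | hne
    · simp
    set d := r.natDegree with hd
    set c : ℂ := r.leadingCoeff / (p d).leadingCoeff with hcdef
    have hcne : c ≠ 0 := div_ne_zero (leadingCoeff_ne_zero.mpr hne) (hlcne d)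
    set r' : Polynomial ℂ := r - C c * p d with hr'
    have hdegeq : (C c * p d).degree = r.degree := by
      rw [degree_C_mul hcne, degree_eq_natDegree (hpne d), degree_eq_natDegree hne, hdeg d]
    have hlceq : r.leadingCoeff = (C c * p d).leadingCoeff := by
      rw [leadingCoeff_mul, leadingCoeff_C, hcdef, div_mul_cancel₀ _ (hlcne d)]
    have hdlt : r'.degree < r.degree := degree_sub_lt hdegeq.symm hne hlceq
    have hr'K : r'.natDegree ≤ K := by
      rcases eq_or_ne r' 0 with h0 | h0
      · simp [h0]
      · have := natDegree_lt_natDegree h0 hdlt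
        omega
    have hr'n : r'.natDegree < n := by
      rcases eq_or_ne r' 0 with h0 | h0
      · simpa [h0] using hrn.trans_le' (Nat.zero_le _)
      · have := natDegree_lt_natDegree h0 hdlt
        omega
    have h1 := integrable_poly_mul_conj μ hc r' (p n)
    have h2 := (integrable_poly_mul_conj μ hc (p d) (p n)).const_mul c
    calc ∫ t, r.eval t * (starRingEnd ℂ) ((p n).eval t) ∂μ
        = ∫ t, (r'.eval t * (starRingEnd ℂ) ((p n).eval t)
            + c * ((p d).eval t * (starRingEnd ℂ) ((p n).eval t))) ∂μ := by
          congr 1; ext t; rw [hr']; simp; ring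
      _ = (∫ t, r'.eval t * (starRingEnd ℂ) ((p n).eval t) ∂μ)
            + c * ∫ t, (p d).eval t * (starRingEnd ℂ) ((p n).eval t) ∂μ := by
          rw [integral_add h1 h2, integral_const_mul]
      _ = 0 := by rw [ih r' hr'K hr'n, hint d n, if_neg (by omega)]; ring

/-- Fejér's theorem: all zeros of the orthonormal polynomials lie in the convex hull
of the support of the measure of orthogonality. -/
theorem stmt_13 (μ : Measure ℂ) [IsFiniteMeasure μ]
    (hc : IsCompact (msupp μ)) (hi : (msupp μ).Infinite)
    (p : ℕ → Polynomial ℂ) (hp : ONP μ p) :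
    ∀ (n : ℕ) (z : ℂ), (p n).eval z = 0 → z ∈ convexHull ℝ (msupp μ) := by
  intro n z₀ hroot
  by_contra hz
  have hlcne : ∀ k, (p k).leadingCoeff ≠ 0 := fun k hk => by
    have := (hp.2.1 k).1; rw [hk] at this; simp at this
  have hpne : ∀ k, (p k) ≠ 0 := fun k => leadingCoeff_ne_zero.mp (hlcne k)
  rcases Nat.eq_zero_or_pos n with rfl | hn
  · -- degree 0: no roots
    have h0 : p 0 = C ((p 0).coeff 0) := eq_C_of_natDegree_le_zero (le_of_eq (hp.1 0))
    have hlc0 : (p 0).leadingCoeff = (p 0).coeff 0 := by rw [leadingCoeff, hp.1 0]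
    rw [h0] at hroot
    simp only [eval_C] at hroot
    exact hlcne 0 (by rw [hlc0, hroot])
  · set q : Polynomial ℂ := (p n) /ₘ (X - C z₀) with hq
    have hfac : (X - C z₀) * q = p n := mul_divByMonic_eq_iff_isRoot.mpr hroot
    have hqne : q ≠ 0 := by
      intro h
      rw [h, mul_zero] at hfac
      exact hpne n hfac.symm
    have hqdeg : q.natDegree < n := by
      have h1 : (p n).natDegree = 1 + q.natDegree := by
        rw [← hfac, natDegree_mul (X_sub_C_ne_zero z₀) hqne, natDegree_X_sub_C]
      rw [hp.1 n] at h1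
      omega
    set w : ℂ → ℝ := fun t => Complex.normSq (q.eval t) with hw
    have hwcont : Continuous w := Complex.continuous_normSq.comp q.continuous
    have hw0 : ∀ t, 0 ≤ w t := fun t => Complex.normSq_nonneg _
    have hwint : Integrable w μ := integrable_of_continuous μ hc hwcont
    set A : ℝ := ∫ t, w t ∂μ with hA
    have hApos : 0 < A := by
      obtain ⟨t₀, ht₀S, ht₀⟩ : ∃ t₀ ∈ msupp μ, q.eval t₀ ≠ 0 := by
        obtain ⟨t₀, ht⟩ := (hi.diff (finite_setOf_isRoot hqne)).nonempty
        exact ⟨t₀, ht.1, ht.2⟩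
      exact pos_integral hwcont hw0 hwint ht₀S
        (by simpa [hw, Complex.normSq_eq_zero] using ht₀)
    have h1 : ∫ t, q.eval t * (starRingEnd ℂ) ((p n).eval t) ∂μ = 0 :=
      orth μ hc p hp n q hqdeg
    have h2 : ∫ t, (p n).eval t * (starRingEnd ℂ) (q.eval t) ∂μ = 0 := by
      calc ∫ t, (p n).eval t * (starRingEnd ℂ) (q.eval t) ∂μ
          = ∫ t, (starRingEnd ℂ) (q.eval t * (starRingEnd ℂ) ((p n).eval t)) ∂μ := by
            congr 1; ext t; simp [map_mul, mul_comm]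
        _ = (starRingEnd ℂ) (∫ t, q.eval t * (starRingEnd ℂ) ((p n).eval t) ∂μ) := integral_conj
        _ = 0 := by rw [h1]; simp
    have h3 : ∫ t, (t - z₀) * (w t : ℂ) ∂μ = 0 := by
      rw [← h2]
      congr 1; ext t
      rw [← hfac]
      simp only [eval_mul, eval_sub, eval_X, eval_C, hw]
      rw [mul_assoc, Complex.mul_conj]
    have hFint : Integrable (fun t => t * (w t : ℂ)) μ :=
      integrable_of_continuous μ hc (by fun_prop)
    have hGint : Integrable (fun t => z₀ * (w t : ℂ)) μ :=
      integrable_of_continuous μ hc (by fun_prop)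
    have hwC : ∫ t, (w t : ℂ) ∂μ = (A : ℂ) := integral_ofReal
    have h4 : ∫ t, t * (w t : ℂ) ∂μ = z₀ * (A : ℂ) := by
      have hsub : ∫ t, (t * (w t : ℂ) - z₀ * (w t : ℂ)) ∂μ
          = (∫ t, t * (w t : ℂ) ∂μ) - ∫ t, z₀ * (w t : ℂ) ∂μ := integral_sub hFint hGint
      have heq : ∫ t, (t * (w t : ℂ) - z₀ * (w t : ℂ)) ∂μ = 0 := by
        rw [← h3]; congr 1; ext t; ring
      rw [heq] at hsub
      have : ∫ t, z₀ * (w t : ℂ) ∂μ = z₀ * (A : ℂ) := by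
        rw [integral_const_mul, hwC]
      rw [this] at hsub
      linear_combination -hsub
    obtain ⟨ℓ, u, hu1, hu2⟩ :=
      geometric_hahn_banach_closed_point (convex_convexHull ℝ (msupp μ)) (isClosed_hull hc) hz
    have h6 : A * ℓ z₀ = ∫ t, w t * ℓ t ∂μ := by
      have hcomm := ℓ.integral_comp_comm hFint
      rw [h4] at hcomm
      have hL : ℓ (z₀ * (A : ℂ)) = A * ℓ z₀ := by
        rw [show z₀ * (A : ℂ) = A • z₀ by rw [Complex.real_smul]; ring, ℓ.map_smul, smul_eq_mul]
      rw [hL] at hcomm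
      rw [← hcomm]
      congr 1; ext t
      rw [show t * (w t : ℂ) = (w t) • t by rw [Complex.real_smul]; ring, ℓ.map_smul, smul_eq_mul]
    have hint1 : Integrable (fun t => w t * ℓ t) μ :=
      integrable_of_continuous μ hc (hwcont.mul ℓ.continuous)
    have hint2 : Integrable (fun t => w t * u) μ := hwint.mul_const u
    have h7 : ∫ t, w t * ℓ t ∂μ ≤ ∫ t, w t * u ∂μ := by
      refine integral_mono_ae hint1 hint2 ?_
      filter_upwards [ae_mem_msupp μ] with t ht
      exact mul_le_mul_of_nonneg_left
        (le_of_lt (hu1 _ (subset_convexHull ℝ _ ht))) (hw0 t)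
    have h8 : ∫ t, w t * u ∂μ = A * u := by rw [integral_mul_const]
    have h9 : A * ℓ z₀ ≤ A * u := by rw [h6, ← h8]; exact h7
    have h10 : ℓ z₀ ≤ u := le_of_mul_le_mul_left (by linarith) hApos
    linarith
end
end

section
/- Let μ be a finite Borel measure with compact infinite support S₁ in ℂ, and let K be a compact subset of the unbounded component Ω of the complement of S₁. Then the Christoffel functions satisfy λ_n(μ, z) → 0 uniformly for z ∈ K; equivalently, Σ_{n=0}^∞ |p_n(μ, z)|² = ∞ uniformly on K. -/
open MeasureTheory Polynomial Filter

noncomputable section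

/-! ### Auxiliary material: polynomial approximation on compact sets -/

/-- `f` is uniformly approximable by polynomials on `S`. -/
def Approx (S : Set ℂ) (f : ℂ → ℂ) : Prop :=
  ∀ ε > 0, ∃ P : Polynomial ℂ, ∀ t ∈ S, ‖f t - P.eval t‖ < ε

lemma approx_add {S : Set ℂ} {f g : ℂ → ℂ} (hf : Approx S f) (hg : Approx S g) :
    Approx S (fun t => f t + g t) := by
  intro ε hε
  obtain ⟨P, hP⟩ := hf (ε/2) (by linarith)
  obtain ⟨Q, hQ⟩ := hg (ε/2) (by linarith)
  refine ⟨P + Q, fun t ht => ?_⟩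
  have h1 := hP t ht
  have h2 := hQ t ht
  have : f t + g t - (P + Q).eval t = (f t - P.eval t) + (g t - Q.eval t) := by
    simp [Polynomial.eval_add]; ring
  rw [this]
  calc ‖_‖ ≤ _ := norm_add_le _ _
    _ < ε/2 + ε/2 := by exact add_lt_add h1 h2
    _ = ε := by ring

lemma approx_const_mul {S : Set ℂ} {f : ℂ → ℂ} (c : ℂ) (hf : Approx S f) :
    Approx S (fun t => c * f t) := by
  intro ε hε
  have hδ : 0 < ε / (‖c‖ + 1) := by positivity
  obtain ⟨P, hP⟩ := hf _ hδ
  refine ⟨Polynomial.C c * P, fun t ht => ?_⟩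
  have h1 := hP t ht
  have : c * f t - (Polynomial.C c * P).eval t = c * (f t - P.eval t) := by
    simp [Polynomial.eval_mul]; ring
  rw [this, norm_mul]
  calc ‖c‖ * ‖f t - P.eval t‖
      ≤ ‖c‖ * (ε / (‖c‖ + 1)) := by
        apply mul_le_mul_of_nonneg_left h1.le (norm_nonneg c)
    _ < ε := by
        rw [mul_div_assoc']
        rw [div_lt_iff₀ (by positivity)]
        nlinarith [norm_nonneg c]

lemma approx_mul {S : Set ℂ} {f g : ℂ → ℂ} {Mf Mg : ℝ} (hMf0 : 0 ≤ Mf) (hMg0 : 0 ≤ Mg)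
    (hbf : ∀ t ∈ S, ‖f t‖ ≤ Mf) (hbg : ∀ t ∈ S, ‖g t‖ ≤ Mg)
    (hf : Approx S f) (hg : Approx S g) : Approx S (fun t => f t * g t) := by
  intro ε hε
  set δ : ℝ := min 1 (ε / (Mf + Mg + 2)) with hδdef
  have hδpos : 0 < δ := lt_min one_pos (by positivity)
  obtain ⟨P, hP⟩ := hf _ hδpos
  obtain ⟨Q, hQ⟩ := hg _ hδpos
  refine ⟨P * Q, fun t ht => ?_⟩
  have h1 := hP t ht
  have h2 := hQ t ht
  have key : f t * g t - (P * Q).eval t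
      = f t * (g t - Q.eval t) + Q.eval t * (f t - P.eval t) := by
    simp [Polynomial.eval_mul]; ring
  have hQb : ‖Q.eval t‖ ≤ Mg + 1 := by
    have : ‖Q.eval t‖ ≤ ‖g t‖ + ‖g t - Q.eval t‖ := by
      calc ‖Q.eval t‖ = ‖g t - (g t - Q.eval t)‖ := by ring_nf
        _ ≤ _ := by
          have := norm_sub_le (g t) (g t - Q.eval t)
          simpa using this
    have hδ1 : δ ≤ 1 := min_le_left _ _
    linarith [hbg t ht]
  rw [key]
  have habs : ‖f t * (g t - Q.eval t) + Q.eval t * (f t - P.eval t)‖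
      ≤ Mf * δ + (Mg + 1) * δ := by
    calc ‖_‖ ≤ ‖f t * (g t - Q.eval t)‖ +
          ‖Q.eval t * (f t - P.eval t)‖ := norm_add_le _ _
      _ ≤ Mf * δ + (Mg + 1) * δ := by
          rw [norm_mul, norm_mul]
          gcongr <;> first
            | exact hbf t ht
            | exact h2.le
            | exact h1.le
            | exact norm_nonneg _
  have hδ2 : δ ≤ ε / (Mf + Mg + 2) := min_le_right _ _
  have : Mf * δ + (Mg + 1) * δ < ε := by
    have h3 : (Mf + Mg + 1) * δ ≤ (Mf + Mg + 1) * (ε / (Mf + Mg + 2)) := by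
      apply mul_le_mul_of_nonneg_left hδ2 (by linarith)
    have h4 : (Mf + Mg + 1) * (ε / (Mf + Mg + 2)) < ε := by
      have hd : 0 < ε / (Mf + Mg + 2) := by positivity
      have he : ε / (Mf + Mg + 2) * (Mf + Mg + 2) = ε :=
        div_mul_cancel₀ _ (by linarith)
      nlinarith
    nlinarith
  linarith [habs]

lemma approx_pow {S : Set ℂ} {f : ℂ → ℂ} {M : ℝ} (hM : 0 ≤ M)
    (hb : ∀ t ∈ S, ‖f t‖ ≤ M) (hf : Approx S f) :
    ∀ k : ℕ, Approx S (fun t => (f t) ^ (k + 1)) := by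
  intro k
  induction k with
  | zero => simpa using hf
  | succ k ih =>
      have hbk : ∀ t ∈ S, ‖(f t) ^ (k+1)‖ ≤ M ^ (k+1) := by
        intro t ht
        rw [norm_pow]
        exact pow_le_pow_left₀ (norm_nonneg _) (hb t ht) _
      have := approx_mul (by positivity) hM hbk hb ih hf
      intro ε hε
      obtain ⟨P, hP⟩ := this ε hε
      exact ⟨P, fun t ht => by simpa [pow_succ] using hP t ht⟩

lemma approx_sum {S : Set ℂ} (n : ℕ) (f : ℕ → ℂ → ℂ)
    (h : ∀ k, k < n → Approx S (f k)) :
    Approx S (fun t => ∑ k ∈ Finset.range n, f k t) := by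
  induction n with
  | zero =>
      intro ε hε
      exact ⟨0, fun t ht => by simpa using hε⟩
  | succ n ih =>
      have h1 := ih (fun k hk => h k (Nat.lt_succ_of_lt hk))
      have h2 := h n (Nat.lt_succ_self n)
      have := approx_add h1 h2
      intro ε hε
      obtain ⟨P, hP⟩ := this ε hε
      exact ⟨P, fun t ht => by simpa [Finset.sum_range_succ] using hP t ht⟩

lemma geom_id1 (z t : ℂ) (hz : z ≠ 0) (htz : t - z ≠ 0) (n : ℕ) :
    (t - z)⁻¹ + ∑ k ∈ Finset.range n, z⁻¹ ^ (k + 1) * t ^ k = (t / z) ^ n * (t - z)⁻¹ := by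
  induction n with
  | zero => simp
  | succ n ih =>
      rw [Finset.sum_range_succ, ← add_assoc, ih]
      field_simp
      ring_nf
      field_simp
      ring

lemma geom_id2 (z w t : ℂ) (htz : t - z ≠ 0) (htw : t - w ≠ 0) (n : ℕ) :
    (t - w)⁻¹ - ∑ k ∈ Finset.range n, (w - z) ^ k * ((t - z)⁻¹) ^ (k + 1)
      = ((w - z) / (t - z)) ^ n * (t - w)⁻¹ := by
  induction n with
  | zero => simp
  | succ n ih =>
      rw [Finset.sum_range_succ, ← sub_sub, ih]
      rw [div_pow, div_pow, inv_pow, pow_succ, pow_succ]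
      field_simp
      ring

lemma far_approx {S : Set ℂ} {R : ℝ} (hR : 1 ≤ R) (hS : S ⊆ Metric.closedBall 0 R) {z : ℂ}
    (hz : 2 * R < ‖z‖) : Approx S (fun t => (t - z)⁻¹) := by
  have hz0 : z ≠ 0 := by
    intro h; rw [h] at hz; simp at hz; linarith
  intro ε hε
  obtain ⟨N, hN⟩ := exists_pow_lt_of_lt_one hε (by norm_num : (1/2 : ℝ) < 1)
  refine ⟨-(∑ k ∈ Finset.range N, Polynomial.C (z⁻¹ ^ (k + 1)) * Polynomial.X ^ k),
    fun t ht => ?_⟩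
  have htR : ‖t‖ ≤ R := by
    have := hS ht; simpa [Complex.dist_eq] using this
  have htz : t - z ≠ 0 := by
    intro h
    have : t = z := by linear_combination h
    rw [this] at htR; linarith
  have heval : Polynomial.eval t
      (-(∑ k ∈ Finset.range N, Polynomial.C (z⁻¹ ^ (k + 1)) * Polynomial.X ^ k))
      = -(∑ k ∈ Finset.range N, z⁻¹ ^ (k + 1) * t ^ k) := by
    simp [Polynomial.eval_finset_sum]
  rw [heval]
  have key : (t - z)⁻¹ - -(∑ k ∈ Finset.range N, z⁻¹ ^ (k + 1) * t ^ k)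
      = (t / z) ^ N * (t - z)⁻¹ := by
    rw [sub_neg_eq_add]; exact geom_id1 z t hz0 htz N
  rw [key, norm_mul, norm_pow, norm_inv, norm_div]
  have h1 : ‖t‖ / ‖z‖ ≤ 1 / 2 := by
    rw [div_le_div_iff₀ (by linarith) (by norm_num)]
    linarith
  have h2 : ‖t - z‖ ≥ R := by
    have h3 : |‖t‖ - ‖z‖| ≤ ‖t - z‖ :=
      abs_norm_sub_norm_le t z
    rw [abs_le] at h3
    linarith [h3.1]
  have h4 : (‖t - z‖)⁻¹ ≤ 1 := by
    rw [inv_le_one_iff₀]; right; linarith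
  calc (‖t‖ / ‖z‖) ^ N * (‖t - z‖)⁻¹
      ≤ (1/2) ^ N * 1 := by
        gcongr
      _ = (1/2) ^ N := by ring
      _ < ε := hN

lemma push_approx {S : Set ℂ} (hSne : S.Nonempty) (hScl : IsClosed S) {z w : ℂ}
    (hzS : z ∉ S) (hz : Approx S (fun t => (t - z)⁻¹))
    (hd : 2 * dist z w < Metric.infDist z S) :
    w ∉ S ∧ Approx S (fun t => (t - w)⁻¹) := by
  set d : ℝ := Metric.infDist z S with hddef
  have hd0 : 0 < d := (hScl.notMem_iff_infDist_pos hSne).1 hzS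
  have htzd : ∀ t ∈ S, d ≤ ‖t - z‖ := by
    intro t ht
    have := Metric.infDist_le_dist_of_mem (x := z) ht
    rwa [Complex.dist_eq, ← norm_neg, neg_sub] at this
  have hzw : ‖w - z‖ < d / 2 := by
    have : dist z w < d / 2 := by linarith
    rwa [Complex.dist_eq, ← norm_neg, neg_sub] at this
  have htw : ∀ t ∈ S, d / 2 ≤ ‖t - w‖ := by
    intro t ht
    have h3 : |‖t - z‖ - ‖w - z‖| ≤ ‖(t - z) - (w - z)‖ :=
      abs_norm_sub_norm_le _ _
    rw [abs_le] at h3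
    have h4 : (t - z) - (w - z) = t - w := by ring
    rw [h4] at h3
    have := htzd t ht
    linarith [h3.1]
  have hwS : w ∉ S := by
    intro hw
    have := htw w hw
    simp at this
    linarith
  refine ⟨hwS, ?_⟩
  intro ε hε
  obtain ⟨N, hN⟩ := exists_pow_lt_of_lt_one (show (0:ℝ) < ε * d / 4 by positivity)
    (by norm_num : (1/2 : ℝ) < 1)
  have hM : ∀ t ∈ S, ‖(t - z)⁻¹‖ ≤ d⁻¹ := by
    intro t ht
    rw [norm_inv]
    exact inv_anti₀ hd0 (htzd t ht)
  have happrox : Approx S (fun t => ∑ k ∈ Finset.range N,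
      (w - z) ^ k * ((t - z)⁻¹) ^ (k + 1)) := by
    apply approx_sum
    intro k _
    exact approx_const_mul _ (approx_pow (by positivity) hM hz k)
  obtain ⟨P, hP⟩ := happrox (ε/2) (by linarith)
  refine ⟨P, fun t ht => ?_⟩
  have htz0 : t - z ≠ 0 := by
    intro h
    have := htzd t ht; rw [h] at this; simp at this; linarith
  have htw0 : t - w ≠ 0 := by
    intro h
    have := htw t ht; rw [h] at this; simp at this; linarith
  have split : (t - w)⁻¹ - P.eval t
      = (((w - z) / (t - z)) ^ N * (t - w)⁻¹)
        + ((∑ k ∈ Finset.range N, (w - z) ^ k * ((t - z)⁻¹) ^ (k + 1)) - P.eval t) := by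
    rw [← geom_id2 z w t htz0 htw0 N]; ring
  rw [split]
  have hq : ‖(w - z) / (t - z)‖ ≤ 1 / 2 := by
    rw [norm_div, div_le_div_iff₀ (lt_of_lt_of_le hd0 (htzd t ht)) (by norm_num)]
    have := htzd t ht
    nlinarith
  have htail : ‖((w - z) / (t - z)) ^ N * (t - w)⁻¹‖ < ε / 2 := by
    rw [norm_mul, norm_pow, norm_inv]
    have h5 : (‖t - w‖)⁻¹ ≤ 2 / d := by
      have h6 : (‖t - w‖)⁻¹ ≤ (d / 2)⁻¹ :=
        inv_anti₀ (by positivity) (htw t ht)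
      rwa [inv_div] at h6
    have h7 : (1/2 : ℝ) ^ N * (2 / d) < ε / 2 := by
      have h8 : (1/2 : ℝ) ^ N * (2 / d) < (ε * d / 4) * (2 / d) :=
        mul_lt_mul_of_pos_right hN (by positivity)
      have h9 : (ε * d / 4) * (2 / d) = ε / 2 := by field_simp; ring
      linarith
    calc ‖(w - z) / (t - z)‖ ^ N * (‖t - w‖)⁻¹
        ≤ (1/2) ^ N * (2 / d) := by
          gcongr
      _ < ε / 2 := h7
  calc ‖_‖ ≤ ‖((w - z) / (t - z)) ^ N * (t - w)⁻¹‖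
        + ‖(∑ k ∈ Finset.range N, (w - z) ^ k * ((t - z)⁻¹) ^ (k + 1)) - P.eval t‖ :=
        norm_add_le _ _
    _ < ε / 2 + ε / 2 := add_lt_add htail (hP t ht)
    _ = ε := by ring

/-- On compact subsets of the unbounded component `Ω` of the complement of the support,
the Christoffel functions tend to zero uniformly. -/
theorem stmt_14 (μ : Measure ℂ) [IsFiniteMeasure μ]
    (hc : IsCompact (msupp μ)) (hi : (msupp μ).Infinite)
    (Ω : Set ℂ) (z₀ : ℂ) (hz₀ : z₀ ∈ Ω)
    (hΩ : Ω = connectedComponentIn (msupp μ)ᶜ z₀)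
    (hΩunb : ¬ Bornology.IsBounded Ω)
    (K : Set ℂ) (hK : IsCompact K) (hKΩ : K ⊆ Ω) :
    TendstoUniformlyOn (fun n z => christoffel μ n z) (fun _ => 0) atTop K := by
  classical
  set S : Set ℂ := msupp μ with hSdef
  have hScl : IsClosed S := hc.isClosed
  have hSne : S.Nonempty := hi.nonempty
  have hΩS : Ω ⊆ Sᶜ := by
    rw [hΩ]; exact connectedComponentIn_subset _ _
  -- the measure of the complement of the support vanishes
  have hμS : μ Sᶜ = 0 := by
    apply measure_null_of_locally_null
    intro x hx
    simp only [hSdef, msupp, Set.mem_compl_iff, Set.mem_setOf_eq, not_forall] at hx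
    obtain ⟨U, hU, hU0⟩ := hx
    exact ⟨U, mem_nhdsWithin_of_mem_nhds hU, by simpa using hU0⟩
  -- a radius bound for the support
  obtain ⟨R₀, hR₀⟩ := hc.isBounded.subset_closedBall 0
  set R : ℝ := max R₀ 1 with hRdef
  have hR1 : 1 ≤ R := le_max_right _ _
  have hSR : S ⊆ Metric.closedBall 0 R :=
    hR₀.trans (Metric.closedBall_subset_closedBall (le_max_left _ _))
  -- the good set A
  set A : Set ℂ := {z : ℂ | z ∉ S ∧ Approx S (fun t => (t - z)⁻¹)} with hAdef
  -- A is open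
  have hAopen : IsOpen A := by
    rw [Metric.isOpen_iff]
    intro z hz
    have hd0 : 0 < Metric.infDist z S := (hScl.notMem_iff_infDist_pos hSne).1 hz.1
    refine ⟨Metric.infDist z S / 2, by linarith, fun w hw => ?_⟩
    have hdist : dist z w < Metric.infDist z S / 2 := by
      rw [dist_comm]; exact hw
    exact push_approx hSne hScl hz.1 hz.2 (by linarith)
  -- a far away point of Ω lies in A
  obtain ⟨zf, hzfΩ, hzf⟩ : ∃ z ∈ Ω, 2 * R < ‖z‖ := by
    by_contra h
    push_neg at h
    exact hΩunb (isBounded_iff_forall_norm_le.2 ⟨2 * R, fun x hx => by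
      simpa using h x hx⟩)
  have hzfA : zf ∈ A := by
    constructor
    · intro hzf'
      have := hSR hzf'
      simp [Complex.dist_eq] at this
      have : ‖zf‖ ≤ R := by simpa using this
      linarith
    · exact far_approx hR1 hSR hzf
  -- Ω is contained in A, by connectedness
  have hΩA : Ω ⊆ A := by
    intro ω hω
    by_contra hωA
    have hcover : Ω ⊆ A ∪ interior Aᶜ := by
      intro x hx
      by_cases hxi : x ∈ interior Aᶜ
      · exact Or.inr hxi
      · left
        have hxS : x ∉ S := hΩS hx
        have hd0 : 0 < Metric.infDist x S := (hScl.notMem_iff_infDist_pos hSne).1 hxS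
        have hball : ¬ (Metric.ball x (Metric.infDist x S / 4) ⊆ Aᶜ) := by
          intro hsub
          exact hxi (mem_interior.2 ⟨_, hsub, Metric.isOpen_ball,
            Metric.mem_ball_self (by linarith)⟩)
        obtain ⟨z, hzball, hzA⟩ : ∃ z ∈ Metric.ball x (Metric.infDist x S / 4), z ∈ A := by
          by_contra h
          push_neg at h
          exact hball fun y hy => h y hy
        have hdist : dist z x < Metric.infDist x S / 4 := hzball
        have hinf : Metric.infDist x S ≤ Metric.infDist z S + dist x z :=
          Metric.infDist_le_infDist_add_dist
        rw [dist_comm] at hdist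
        have h2d : 2 * dist z x < Metric.infDist z S := by
          rw [dist_comm]
          linarith
        exact push_approx hSne hScl hzA.1 hzA.2 h2d
    have hpre : IsPreconnected Ω := by
      rw [hΩ]; exact isPreconnected_connectedComponentIn
    obtain ⟨x, _, hxA, hxAc⟩ := hpre A (interior Aᶜ) hAopen isOpen_interior hcover
      ⟨zf, hzfΩ, hzfA⟩ ⟨ω, hω, (hcover hω).resolve_left hωA⟩
    exact interior_subset hxAc hxA
  -- a bound for K
  obtain ⟨RK₀, hRK₀⟩ := hK.isBounded.subset_closedBall 0
  set RK : ℝ := max RK₀ 0 with hRKdef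
  have hKR : K ⊆ Metric.closedBall 0 RK :=
    hRK₀.trans (Metric.closedBall_subset_closedBall (le_max_left _ _))
  have hRK0 : 0 ≤ RK := le_max_right _ _
  -- For every z ∈ K and δ > 0 there is a polynomial equal to 1 at z and < δ on S
  have hA : ∀ z ∈ K, ∀ δ > 0, ∃ Q : Polynomial ℂ, Q.eval z = 1 ∧
      ∀ t ∈ S, ‖Q.eval t‖ < δ := by
    intro z hz δ hδ
    have hzA : z ∈ A := hΩA (hKΩ hz)
    have hzR : ‖z‖ ≤ RK := by
      have := hKR hz
      simpa [Complex.dist_eq] using this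
    have hε' : 0 < δ / (R + RK + 1) := by positivity
    obtain ⟨P, hP⟩ := hzA.2 _ hε'
    refine ⟨1 - (Polynomial.X - Polynomial.C z) * P, by simp, fun t ht => ?_⟩
    have htz : t - z ≠ 0 := sub_ne_zero.2 (by
      intro h; rw [h] at ht; exact hzA.1 ht)
    have heval : (1 - (Polynomial.X - Polynomial.C z) * P).eval t
        = (t - z) * ((t - z)⁻¹ - P.eval t) := by
      simp [Polynomial.eval_mul, Polynomial.eval_sub, mul_sub]
      field_simp
    rw [heval, norm_mul]
    have htR : ‖t‖ ≤ R := by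
      have := hSR ht
      simpa [Complex.dist_eq] using this
    have habs : ‖t - z‖ ≤ R + RK := by
      calc ‖t - z‖ ≤ ‖t‖ + ‖z‖ := norm_sub_le t z
        _ ≤ R + RK := add_le_add htR hzR
    calc ‖t - z‖ * ‖(t - z)⁻¹ - P.eval t‖
        ≤ (R + RK) * ‖(t - z)⁻¹ - P.eval t‖ := by
          apply mul_le_mul_of_nonneg_right habs (norm_nonneg _)
      _ ≤ (R + RK) * (δ / (R + RK + 1)) := by
          apply mul_le_mul_of_nonneg_left (hP t ht).le (by linarith)
      _ < δ := by
          rw [mul_div_assoc']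
          rw [div_lt_iff₀ (by linarith)]
          nlinarith
  -- main estimate
  rw [Metric.tendstoUniformlyOn_iff]
  intro ε hε
  set m : ℝ := (μ Set.univ).toReal with hmdef
  have hm : 0 ≤ m := ENNReal.toReal_nonneg
  set δ : ℝ := Real.sqrt (ε / (4 * (m + 1))) with hδdef
  have hδpos : 0 < δ := Real.sqrt_pos.2 (by positivity)
  have hδsq : δ ^ 2 = ε / (4 * (m + 1)) := Real.sq_sqrt (by positivity)
  -- choose polynomials
  have hchoice : ∀ z ∈ K, ∃ Q : Polynomial ℂ, Q.eval z = 1 ∧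
      ∀ t ∈ S, ‖Q.eval t‖ < δ := fun z hz => hA z hz δ hδpos
  choose! Q hQ1 hQ2 using hchoice
  set U : ℂ → Set ℂ := fun z => {w | 1/2 < ‖(Q z).eval w‖} with hUdef
  have hUopen : ∀ z, IsOpen (U z) := fun z =>
    isOpen_lt continuous_const (continuous_norm.comp (Q z).continuous)
  have hUnhds : ∀ z ∈ K, U z ∈ nhds z := by
    intro z hz
    apply (hUopen z).mem_nhds
    show 1/2 < ‖(Q z).eval z‖
    rw [hQ1 z hz]
    norm_num
  obtain ⟨F, hFK, hFcov⟩ := hK.elim_nhds_subcover U hUnhds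
  set N : ℕ := F.sup fun z => (Q z).natDegree with hNdef
  filter_upwards [eventually_ge_atTop N] with n hn
  intro w hw
  obtain ⟨z, hzF, hzU⟩ := Set.mem_iUnion₂.1 (hFcov hw)
  have hzK : z ∈ K := hFK z hzF
  have hQzw : 1/2 < ‖(Q z).eval w‖ := hzU
  have hc0 : (Q z).eval w ≠ 0 := by
    intro h; rw [h] at hQzw; simp at hQzw; linarith
  set Rp : Polynomial ℂ := Polynomial.C (((Q z).eval w)⁻¹) * Q z with hRpdef
  have hdeg : Rp.natDegree ≤ n :=
    le_trans (Polynomial.natDegree_C_mul_le _ _)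
      (le_trans (Finset.le_sup (f := fun z => (Q z).natDegree) hzF) hn)
  have hevalw : Rp.eval w = 1 := by
    simp [hRpdef, Polynomial.eval_mul]
    exact inv_mul_cancel₀ hc0
  have hRb : ∀ t ∈ S, ‖Rp.eval t‖ ≤ 2 * δ := by
    intro t ht
    rw [hRpdef]
    simp only [Polynomial.eval_mul, Polynomial.eval_C, norm_mul, norm_inv]
    have hinv : (‖(Q z).eval w‖)⁻¹ ≤ 2 := by
      rw [inv_le_comm₀ (by linarith) (by norm_num)]
      linarith
    exact mul_le_mul hinv (hQ2 z hzK t ht).le (norm_nonneg _) (by norm_num)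
  -- the integral of |Rp|² is small
  set f : (ℂ → ℝ) := fun t => ‖Rp.eval t‖ ^ 2 with hfdef
  have hfmeas : AEStronglyMeasurable f μ :=
    ((continuous_norm.comp Rp.continuous).pow 2).aestronglyMeasurable
  have haeS : ∀ᵐ t ∂μ, t ∈ S := by
    rw [MeasureTheory.ae_iff]
    exact measure_mono_null (fun t ht => ht) hμS
  have haebound : ∀ᵐ t ∂μ, f t ≤ (2 * δ) ^ 2 := by
    filter_upwards [haeS] with t ht
    have := hRb t ht
    simpa [hfdef] using pow_le_pow_left₀ (norm_nonneg _) this 2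
  have hfint : Integrable f μ := by
    apply Integrable.mono' (integrable_const ((2 * δ) ^ 2)) hfmeas
    filter_upwards [haebound] with t ht
    rwa [Real.norm_eq_abs, abs_of_nonneg (by positivity)]
  have hrle : ∫ t, f t ∂μ ≤ (2 * δ) ^ 2 * m := by
    calc ∫ t, f t ∂μ ≤ ∫ _, (2 * δ) ^ 2 ∂μ :=
          integral_mono_ae hfint (integrable_const _) haebound
      _ = (2 * δ) ^ 2 * m := by
          rw [integral_const]; rw [smul_eq_mul]; change m * (2 * δ) ^ 2 = _; ring
  have hrε : ∫ t, f t ∂μ < ε := by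
    have h1 : (2 * δ) ^ 2 * m = 4 * (ε / (4 * (m + 1))) * m := by
      have : (2 * δ) ^ 2 = 4 * δ ^ 2 := by ring
      rw [this, hδsq]
    have h2 : 4 * (ε / (4 * (m + 1))) * m < ε := by
      have hmp : (0:ℝ) < m + 1 := by linarith
      have heq : 4 * (ε / (4 * (m + 1))) * m = ε * m / (m + 1) := by
        field_simp
      rw [heq, div_lt_iff₀ hmp]
      nlinarith
    calc ∫ t, f t ∂μ ≤ (2 * δ) ^ 2 * m := hrle
      _ = 4 * (ε / (4 * (m + 1))) * m := h1
      _ < ε := h2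
  -- conclude via the definition of the Christoffel function
  set T : Set ℝ := {r : ℝ | ∃ P : Polynomial ℂ, P.natDegree ≤ n ∧ P.eval w = 1 ∧
      r = ∫ t, ‖P.eval t‖ ^ 2 ∂μ} with hTdef
  have hmem : (∫ t, f t ∂μ) ∈ T := ⟨Rp, hdeg, hevalw, rfl⟩
  have hbdd : BddBelow T := by
    refine ⟨0, fun x hx => ?_⟩
    obtain ⟨P, _, _, hx⟩ := hx
    rw [hx]
    exact integral_nonneg fun t => by positivity
  have h1 : christoffel μ n w ≤ ∫ t, f t ∂μ := csInf_le hbdd hmem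
  have h2 : 0 ≤ christoffel μ n w := by
    apply le_csInf ⟨_, hmem⟩
    intro b hb
    obtain ⟨P, _, _, hb⟩ := hb
    rw [hb]
    exact integral_nonneg fun t => by positivity
  rw [Real.dist_eq]
  rw [abs_sub_comm, sub_zero, abs_of_nonneg h2]
  linarith
end
end

section
/- Let μ₀ = μ₁ + μ₂ with Σ_{j=0}^∞ ‖p_j(μ₁,·)‖²_{L²(μ₂)} < ∞. Fix ε_m := Σ_{j=m}^∞ ‖p_j(μ₁,·)‖²_{L²(μ₂)}, and suppose z ∈ ℂ and n > m are such that Σ_{j=m}^n |p_j(μ₁, z)|² > M > 0. Then λ_n(μ₁, z) ≤ λ_n(μ₀, z) ≤ λ_n(μ₁, z) · (1 + ε_m + ((1+ε_m)/M) Σ_{j=0}^{m−1} |p_j(μ₁, z)|²). -/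
open MeasureTheory Polynomial Filter

noncomputable section

lemma integrable_of_compl_null {μ : Measure ℂ} [IsFiniteMeasure μ] {K : Set ℂ}
    (hK : IsCompact K) (hnull : μ Kᶜ = 0) {E : Type*} [NormedAddCommGroup E]
    {f : ℂ → E} (hf : Continuous f) : Integrable f μ := by
  obtain ⟨C, hC⟩ := hK.exists_bound_of_continuousOn hf.continuousOn
  refine Integrable.mono' (integrable_const C) hf.aestronglyMeasurable ?_
  have hae : ∀ᵐ x ∂μ, x ∈ K := by
    rw [ae_iff]
    exact hnull
  filter_upwards [hae] with x hxK using hC x hxK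

lemma memLp2_of_compl_null {μ : Measure ℂ} [IsFiniteMeasure μ] {K : Set ℂ}
    (hK : IsCompact K) (hnull : μ Kᶜ = 0) {f : ℂ → ℝ} (hf : Continuous f) :
    MemLp f (ENNReal.ofReal 2) μ := by
  obtain ⟨C, hC⟩ := hK.exists_bound_of_continuousOn hf.continuousOn
  have hae : ∀ᵐ x ∂μ, x ∈ K := by
    rw [ae_iff]; exact hnull
  have htop : MemLp f ⊤ μ := by
    refine memLp_top_of_bound hf.aestronglyMeasurable C ?_
    filter_upwards [hae] with x hxK using hC x hxK
  exact htop.mono_exponent le_top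
lemma span_aux (p : ℕ → Polynomial ℂ) (hdeg : ∀ j, (p j).natDegree = j)
    (hlc : ∀ j, (p j).leadingCoeff ≠ 0) :
    ∀ (n : ℕ) (P : Polynomial ℂ), P.natDegree ≤ n → ∃ c : ℕ → ℂ,
      P = ∑ j ∈ Finset.range (n + 1), Polynomial.C (c j) * p j := by
  intro n
  induction n with
  | zero =>
    intro P hP
    have hP0 : P = Polynomial.C (P.coeff 0) := (Polynomial.eq_C_of_natDegree_le_zero hP)
    have hp0 : p 0 = Polynomial.C ((p 0).coeff 0) :=
      Polynomial.eq_C_of_natDegree_le_zero (le_of_eq (hdeg 0))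
    have hne : (p 0).coeff 0 ≠ 0 := by
      have := hlc 0
      rwa [Polynomial.leadingCoeff, hdeg 0] at this
    refine ⟨fun _ => P.coeff 0 / (p 0).coeff 0, ?_⟩
    rw [Finset.sum_range_one]
    show P = Polynomial.C (P.coeff 0 / (p 0).coeff 0) * p 0
    rw [hp0, Polynomial.coeff_C_zero, ← Polynomial.C_mul, div_mul_cancel₀ _ hne, ← hP0]
  | succ n ih =>
    intro P hP
    set a : ℂ := P.coeff (n + 1) / (p (n + 1)).leadingCoeff with ha
    have hQ : (P - Polynomial.C a * p (n + 1)).natDegree ≤ n := by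
      rw [Polynomial.natDegree_le_iff_coeff_eq_zero]
      intro N hN
      rw [Polynomial.coeff_sub, Polynomial.coeff_C_mul]
      rcases eq_or_lt_of_le (Nat.succ_le_of_lt hN) with h | h
      · have hcN : (p (n + 1)).coeff N = (p (n + 1)).leadingCoeff := by
          rw [← h, Polynomial.leadingCoeff, hdeg]
        rw [hcN, ha, div_mul_cancel₀ _ (hlc (n + 1)), ← h, sub_self]
      · have h1 : P.coeff N = 0 :=
          Polynomial.coeff_eq_zero_of_natDegree_lt (lt_of_le_of_lt hP h)
        have h2 : (p (n + 1)).coeff N = 0 :=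
          Polynomial.coeff_eq_zero_of_natDegree_lt (by rw [hdeg]; exact h)
        rw [h1, h2, mul_zero, sub_self]
    obtain ⟨c, hc⟩ := ih _ hQ
    refine ⟨fun j => if j = n + 1 then a else c j, ?_⟩
    show P = ∑ j ∈ Finset.range (n + 1 + 1),
        Polynomial.C (if j = n + 1 then a else c j) * p j
    rw [Finset.sum_range_succ, if_pos rfl]
    have heq : ∑ j ∈ Finset.range (n + 1),
        Polynomial.C (if j = n + 1 then a else c j) * p j
        = ∑ j ∈ Finset.range (n + 1), Polynomial.C (c j) * p j := by
      refine Finset.sum_congr rfl fun j hj => ?_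
      have := Finset.mem_range.mp hj
      rw [if_neg (by omega)]
    rw [heq, ← hc]
    ring
lemma conj_mul_self (w : ℂ) : w * (starRingEnd ℂ) w = ((‖w‖ ^ 2 : ℝ) : ℂ) := by
  rw [Complex.mul_conj, Complex.normSq_eq_norm_sq]

lemma eval_csum (s : Finset ℕ) (c : ℕ → ℂ) (p : ℕ → Polynomial ℂ) (t : ℂ) :
    (∑ j ∈ s, Polynomial.C (c j) * p j).eval t = ∑ j ∈ s, c j * (p j).eval t := by
  rw [Polynomial.eval_finset_sum]
  exact Finset.sum_congr rfl fun j _ => by rw [Polynomial.eval_mul, Polynomial.eval_C]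

lemma expand_integral (μ : Measure ℂ) [IsFiniteMeasure μ] (hK : IsCompact (msupp μ))
    (p : ℕ → Polynomial ℂ)
    (horth : ∀ i j, ∫ t, (p i).eval t * (starRingEnd ℂ) ((p j).eval t) ∂μ
      = if i = j then 1 else 0)
    (s : Finset ℕ) (c : ℕ → ℂ) :
    ∫ t, ‖(∑ j ∈ s, Polynomial.C (c j) * p j).eval t‖ ^ 2 ∂μ
      = ∑ j ∈ s, ‖c j‖ ^ 2 := by
  have hnull := msupp_compl_null μ
  have hint : ∀ i j, Integrable
      (fun t => (p i).eval t * (starRingEnd ℂ) ((p j).eval t)) μ := fun i j =>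
    integrable_of_compl_null hK hnull
      (((p i).continuous).mul (continuous_star.comp (p j).continuous))
  set F : ℂ → ℂ := fun t => (∑ j ∈ s, Polynomial.C (c j) * p j).eval t with hFdef
  have hF : ∀ t, F t = ∑ j ∈ s, c j * (p j).eval t := fun t => eval_csum s c p t
  have hprod : ∀ t, F t * (starRingEnd ℂ) (F t) = ∑ i ∈ s, ∑ j ∈ s,
      (c i * (starRingEnd ℂ) (c j)) *
        ((p i).eval t * (starRingEnd ℂ) ((p j).eval t)) := by
    intro t
    rw [hF t, map_sum, Finset.sum_mul_sum]
    refine Finset.sum_congr rfl fun i _ => Finset.sum_congr rfl fun j _ => ?_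
    rw [map_mul]
    ring
  have h1 : ∫ t, F t * (starRingEnd ℂ) (F t) ∂μ
      = ((∫ t, ‖F t‖ ^ 2 ∂μ : ℝ) : ℂ) := by
    rw [show (fun t => F t * (starRingEnd ℂ) (F t))
        = fun t => ((‖F t‖ ^ 2 : ℝ) : ℂ) from
      funext fun t => conj_mul_self (F t)]
    exact integral_ofReal
  have h2 : ∫ t, F t * (starRingEnd ℂ) (F t) ∂μ
      = ((∑ j ∈ s, ‖c j‖ ^ 2 : ℝ) : ℂ) := by
    calc ∫ t, F t * (starRingEnd ℂ) (F t) ∂μ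
        = ∑ i ∈ s, ∑ j ∈ s, (c i * (starRingEnd ℂ) (c j)) *
            (if i = j then (1 : ℂ) else 0) := by
          simp_rw [hprod]
          rw [integral_finset_sum _ (fun i _ =>
            integrable_finset_sum _ (fun j _ => ((hint i j).const_mul _)))]
          refine Finset.sum_congr rfl fun i _ => ?_
          rw [integral_finset_sum _ (fun j _ => ((hint i j).const_mul _))]
          refine Finset.sum_congr rfl fun j _ => ?_
          rw [integral_const_mul, horth i j]
      _ = ∑ j ∈ s, ((‖c j‖ ^ 2 : ℝ) : ℂ) := by
          refine Finset.sum_congr rfl fun i hi => ?_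
          simp only [mul_ite, mul_one, mul_zero]
          rw [Finset.sum_ite_eq s i (fun j => c i * (starRingEnd ℂ) (c j)), if_pos hi,
            conj_mul_self]
      _ = ((∑ j ∈ s, ‖c j‖ ^ 2 : ℝ) : ℂ) := by push_cast; ring
  exact_mod_cast h1.symm.trans h2

/-- Comparison of the Christoffel functions of `μ₀ = μ₁ + μ₂` and `μ₁`:
`λ_n(μ₁,z) ≤ λ_n(μ₀,z) ≤ λ_n(μ₁,z)(1 + ε_m + ((1+ε_m)/M) ∑_{j<m} |p_j(μ₁,z)|²)`. -/
theorem stmt_15 (μ0 μ1 μ2 : Measure ℂ) [IsFiniteMeasure μ1] [IsFiniteMeasure μ2]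
    (hsum : μ0 = μ1 + μ2) (hle : μ1 ≤ μ0)
    (h0c : IsCompact (msupp μ0)) (h0i : (msupp μ0).Infinite)
    (h1c : IsCompact (msupp μ1)) (h1i : (msupp μ1).Infinite)
    (p : ℕ → Polynomial ℂ) (hp : ONP μ1 p)
    (hsummable : Summable (fun j : ℕ => ∫ z, ‖(p j).eval z‖ ^ 2 ∂μ2))
    (m n : ℕ) (hmn : m < n) (z : ℂ) (M : ℝ) (hM : 0 < M)
    (hlow : M < ∑ j ∈ Finset.Icc m n, ‖(p j).eval z‖ ^ 2)
    (ε : ℝ) (hε : ε = ∑' j : ℕ, ∫ w, ‖(p (m + j)).eval w‖ ^ 2 ∂μ2) :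
    christoffel μ1 n z ≤ christoffel μ0 n z ∧
    christoffel μ0 n z ≤ christoffel μ1 n z *
      (1 + ε + ((1 + ε) / M) * ∑ j ∈ Finset.range m, ‖(p j).eval z‖ ^ 2) := by
  haveI : IsFiniteMeasure μ0 := by rw [hsum]; infer_instance
  obtain ⟨hdeg, hpos, horth⟩ := hp
  have hlc : ∀ j, (p j).leadingCoeff ≠ 0 := by
    intro j h
    have := (hpos j).1
    rw [h] at this
    simp at this
  have null0 : μ0 (msupp μ0)ᶜ = 0 := msupp_compl_null μ0
  have null1' : μ1 (msupp μ1)ᶜ = 0 := msupp_compl_null μ1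
  have null1 : μ1 (msupp μ0)ᶜ = 0 :=
    le_antisymm ((Measure.le_iff'.1 hle _).trans null0.le) zero_le
  have null2 : μ2 (msupp μ0)ᶜ = 0 := by
    refine le_antisymm (le_trans ?_ null0.le) zero_le
    rw [hsum, Measure.add_apply]
    exact le_add_self
  -- continuity of |P.eval|^2
  have hcont : ∀ P : Polynomial ℂ, Continuous fun t => ‖P.eval t‖ ^ 2 :=
    fun P => (continuous_norm.comp P.continuous).pow 2
  have int1 : ∀ P : Polynomial ℂ, Integrable (fun t => ‖P.eval t‖ ^ 2) μ1 :=
    fun P => integrable_of_compl_null h0c null1 (hcont P)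
  have int2 : ∀ P : Polynomial ℂ, Integrable (fun t => ‖P.eval t‖ ^ 2) μ2 :=
    fun P => integrable_of_compl_null h0c null2 (hcont P)
  have hbdd : ∀ μ : Measure ℂ, BddBelow {r : ℝ | ∃ P : Polynomial ℂ, P.natDegree ≤ n ∧
      P.eval z = 1 ∧ r = ∫ t, ‖P.eval t‖ ^ 2 ∂μ} := by
    intro μ
    refine ⟨0, ?_⟩
    rintro r ⟨P, -, -, rfl⟩
    exact integral_nonneg fun t => by positivity
  have hne : ∀ μ : Measure ℂ, {r : ℝ | ∃ P : Polynomial ℂ, P.natDegree ≤ n ∧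
      P.eval z = 1 ∧ r = ∫ t, ‖P.eval t‖ ^ 2 ∂μ}.Nonempty := by
    intro μ
    exact ⟨_, 1, by simp, by simp, rfl⟩
  have hsplit : ∀ P : Polynomial ℂ, ∫ t, ‖P.eval t‖ ^ 2 ∂μ0
      = (∫ t, ‖P.eval t‖ ^ 2 ∂μ1) + ∫ t, ‖P.eval t‖ ^ 2 ∂μ2 := by
    intro P
    rw [hsum]
    exact integral_add_measure (int1 P) (int2 P)
  -- Part 1
  have part1 : christoffel μ1 n z ≤ christoffel μ0 n z := by
    simp only [christoffel]
    refine le_csInf (hne μ0) ?_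
    rintro r ⟨P, hdP, hevP, rfl⟩
    have hmem : (∫ t, ‖P.eval t‖ ^ 2 ∂μ1) ∈ {r : ℝ | ∃ P : Polynomial ℂ,
        P.natDegree ≤ n ∧ P.eval z = 1 ∧ r = ∫ t, ‖P.eval t‖ ^ 2 ∂μ1} :=
      ⟨P, hdP, hevP, rfl⟩
    have h1 := csInf_le (hbdd μ1) hmem
    have h2 : (0:ℝ) ≤ ∫ t, ‖P.eval t‖ ^ 2 ∂μ2 :=
      integral_nonneg fun t => by positivity
    rw [hsplit P]
    linarith
  refine ⟨part1, ?_⟩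
  -- notation
  set A := ∑ j ∈ Finset.range m, ‖(p j).eval z‖ ^ 2 with hA_def
  set S := ∑ j ∈ Finset.Icc m n, ‖(p j).eval z‖ ^ 2 with hS_def
  have hS : 0 < S := hM.trans hlow
  have hA : 0 ≤ A := Finset.sum_nonneg fun j _ => by positivity
  have hKpos : 0 < A + S := by linarith
  have hKsum : ∑ j ∈ Finset.range (n + 1), ‖(p j).eval z‖ ^ 2 = A + S := by
    rw [hA_def, hS_def, Finset.range_eq_Ico,
      ← Finset.sum_Ico_consecutive _ (Nat.zero_le m) (by omega : m ≤ n + 1),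
      ← Finset.range_eq_Ico, Finset.Ico_add_one_right_eq_Icc]
  have hv : ∀ j : ℕ, 0 ≤ ∫ t, ‖(p j).eval t‖ ^ 2 ∂μ2 :=
    fun j => integral_nonneg fun t => by positivity
  have hεnn : 0 ≤ ε := hε ▸ tsum_nonneg fun i => hv _
  -- lower bound for christoffel μ1
  have lower1 : (A + S)⁻¹ ≤ christoffel μ1 n z := by
    simp only [christoffel]
    refine le_csInf (hne μ1) ?_
    rintro r ⟨P, hdP, hevP, rfl⟩
    obtain ⟨c, rfl⟩ := span_aux p hdeg hlc n P hdP
    rw [expand_integral μ1 h1c p horth]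
    have habs1 : ‖(∑ j ∈ Finset.range (n + 1),
        Polynomial.C (c j) * p j).eval z‖ = 1 := by rw [hevP]; simp
    have h1 : (1:ℝ) ≤ (∑ j ∈ Finset.range (n + 1),
        ‖c j‖ * ‖(p j).eval z‖) ^ 2 := by
      calc (1:ℝ) = ‖(∑ j ∈ Finset.range (n + 1),
            Polynomial.C (c j) * p j).eval z‖ ^ 2 := by rw [habs1]; norm_num
        _ ≤ _ := by
            apply pow_le_pow_left₀ (norm_nonneg _)
            rw [eval_csum]
            refine (norm_sum_le _ _).trans (le_of_eq ?_)
            exact Finset.sum_congr rfl fun j _ => norm_mul _ _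
    have h2 := Finset.sum_mul_sq_le_sq_mul_sq (Finset.range (n + 1))
      (fun j => ‖c j‖) (fun j => ‖(p j).eval z‖)
    rw [hKsum] at h2
    rw [inv_eq_one_div, div_le_iff₀ hKpos]
    calc (1:ℝ) ≤ _ := h1
      _ ≤ _ := h2
      _ = (∑ j ∈ Finset.range (n + 1), ‖c j‖ ^ 2) * (A + S) := rfl
  -- test polynomial
  set cQ : ℕ → ℂ := fun j => (starRingEnd ℂ) ((p j).eval z) / ((S:ℝ) : ℂ) with hcQ
  set Q : Polynomial ℂ := ∑ j ∈ Finset.Icc m n, Polynomial.C (cQ j) * p j with hQ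
  have hQdeg : Q.natDegree ≤ n := by
    refine Polynomial.natDegree_sum_le_of_forall_le _ _ fun j hj => ?_
    refine (Polynomial.natDegree_C_mul_le _ _).trans ?_
    rw [hdeg]
    exact (Finset.mem_Icc.mp hj).2
  have hSne : ((S:ℝ) : ℂ) ≠ 0 := Complex.ofReal_ne_zero.2 hS.ne'
  have hQz : Q.eval z = 1 := by
    rw [hQ, eval_csum]
    have hterm : ∀ j ∈ Finset.Icc m n, cQ j * (p j).eval z
        = ((‖(p j).eval z‖ ^ 2 : ℝ) : ℂ) / ((S:ℝ) : ℂ) := by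
      intro j _
      rw [hcQ]
      simp only []
      rw [div_mul_eq_mul_div, mul_comm, conj_mul_self]
    rw [Finset.sum_congr rfl hterm, ← Finset.sum_div, ← Complex.ofReal_sum, ← hS_def,
      div_self hSne]
  have habs_cQ : ∀ j, ‖cQ j‖ ^ 2 = ‖(p j).eval z‖ ^ 2 / S ^ 2 := by
    intro j
    rw [hcQ]
    simp only []
    rw [norm_div, Complex.norm_conj, Complex.norm_real, Real.norm_eq_abs, abs_of_pos hS, div_pow]
  have hQ1 : ∫ t, ‖Q.eval t‖ ^ 2 ∂μ1 = S⁻¹ := by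
    rw [hQ, expand_integral μ1 h1c p horth]
    rw [Finset.sum_congr rfl (fun j _ => habs_cQ j), ← Finset.sum_div, ← hS_def, sq,
      div_mul_cancel_left₀ hS.ne']
  -- μ2 estimates
  have hgc : ∀ j : ℕ, Continuous fun t => ‖(p j).eval t‖ :=
    fun j => continuous_norm.comp (p j).continuous
  have hw2 : ∀ j : ℕ, ((∫ t, ‖(p j).eval t‖ ^ 2 ∂μ2) ^ ((1:ℝ)/2)) ^ 2
      = ∫ t, ‖(p j).eval t‖ ^ 2 ∂μ2 := by
    intro j
    rw [← Real.rpow_natCast ((∫ t, ‖(p j).eval t‖ ^ 2 ∂μ2) ^ ((1:ℝ)/2)) 2,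
      ← Real.rpow_mul (hv j)]
    norm_num
  have hCS : ∀ i j : ℕ, ∫ t, ‖(p i).eval t‖ * ‖(p j).eval t‖ ∂μ2
      ≤ (∫ t, ‖(p i).eval t‖ ^ 2 ∂μ2) ^ ((1:ℝ)/2)
        * (∫ t, ‖(p j).eval t‖ ^ 2 ∂μ2) ^ ((1:ℝ)/2) := by
    intro i j
    have hconj : Real.HolderConjugate 2 2 := Real.HolderConjugate.two_two
    have hr : ∀ q : Polynomial ℂ,
        (∫ t, ‖q.eval t‖ ^ (2:ℝ) ∂μ2) = ∫ t, ‖q.eval t‖ ^ 2 ∂μ2 := by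
      intro q
      refine integral_congr_ae (Filter.Eventually.of_forall fun t => ?_)
      show ‖q.eval t‖ ^ (2:ℝ) = ‖q.eval t‖ ^ (2:ℕ)
      rw [← Real.rpow_natCast (‖q.eval t‖) 2]
      norm_num
    have h := integral_mul_le_Lp_mul_Lq_of_nonneg (μ := μ2) hconj
      (f := fun t => ‖(p i).eval t‖) (g := fun t => ‖(p j).eval t‖)
      (Filter.Eventually.of_forall fun t => norm_nonneg _)
      (Filter.Eventually.of_forall fun t => norm_nonneg _)
      (memLp2_of_compl_null h0c null2 (hgc i))
      (memLp2_of_compl_null h0c null2 (hgc j))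
    rw [hr (p i), hr (p j)] at h
    simpa using h
  have hpt : ∀ t : ℂ, ‖Q.eval t‖ ^ 2
      ≤ (∑ j ∈ Finset.Icc m n,
          (‖(p j).eval z‖ / S) * ‖(p j).eval t‖) ^ 2 := by
    intro t
    apply pow_le_pow_left₀ (norm_nonneg _)
    rw [hQ, eval_csum]
    refine (norm_sum_le _ _).trans (le_of_eq ?_)
    refine Finset.sum_congr rfl fun j _ => ?_
    rw [norm_mul, hcQ]
    simp only []
    rw [norm_div, Complex.norm_conj, Complex.norm_real, Real.norm_eq_abs, abs_of_pos hS]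
  have hG2 : ∀ t : ℂ, (∑ j ∈ Finset.Icc m n,
        (‖(p j).eval z‖ / S) * ‖(p j).eval t‖) ^ 2
      = ∑ i ∈ Finset.Icc m n, ∑ j ∈ Finset.Icc m n,
          ((‖(p i).eval z‖ / S) * (‖(p j).eval z‖ / S)) *
            (‖(p i).eval t‖ * ‖(p j).eval t‖) := by
    intro t
    rw [sq, Finset.sum_mul_sum]
    exact Finset.sum_congr rfl fun i _ => Finset.sum_congr rfl fun j _ => by ring
  have intg2 : ∀ i j : ℕ,
      Integrable (fun t => ‖(p i).eval t‖ * ‖(p j).eval t‖) μ2 :=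
    fun i j => integrable_of_compl_null h0c null2 ((hgc i).mul (hgc j))
  have contG : Continuous fun t => (∑ j ∈ Finset.Icc m n,
      (‖(p j).eval z‖ / S) * ‖(p j).eval t‖) ^ 2 :=
    (continuous_finset_sum _ fun j _ => continuous_const.mul (hgc j)).pow 2
  have intG : Integrable (fun t => (∑ j ∈ Finset.Icc m n,
      (‖(p j).eval z‖ / S) * ‖(p j).eval t‖) ^ 2) μ2 :=
    integrable_of_compl_null h0c null2 contG
  have htail : ∑ j ∈ Finset.Icc m n, (∫ t, ‖(p j).eval t‖ ^ 2 ∂μ2) ≤ ε := by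
    rw [hε]
    have hsum' : Summable fun i : ℕ => ∫ t, ‖(p (m + i)).eval t‖ ^ 2 ∂μ2 := by
      have h := (summable_nat_add_iff
        (f := fun j : ℕ => ∫ t, ‖(p j).eval t‖ ^ 2 ∂μ2) m).2 hsummable
      simpa [add_comm] using h
    have hIcc : ∑ j ∈ Finset.Icc m n, (∫ t, ‖(p j).eval t‖ ^ 2 ∂μ2)
        = ∑ i ∈ Finset.range (n + 1 - m),
            ∫ t, ‖(p (m + i)).eval t‖ ^ 2 ∂μ2 := by
      rw [← Finset.Ico_add_one_right_eq_Icc, Finset.sum_Ico_eq_sum_range]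
    rw [hIcc]
    exact Summable.sum_le_tsum _ (fun i _ => hv _) hsum'
  have hsumA : ∑ j ∈ Finset.Icc m n, (‖(p j).eval z‖ / S) ^ 2 = S⁻¹ := by
    have : ∀ j ∈ Finset.Icc m n, (‖(p j).eval z‖ / S) ^ 2
        = ‖(p j).eval z‖ ^ 2 / S ^ 2 := fun j _ => div_pow _ _ _
    rw [Finset.sum_congr rfl this, ← Finset.sum_div, ← hS_def, sq,
      div_mul_cancel_left₀ hS.ne']
  have hQ2 : ∫ t, ‖Q.eval t‖ ^ 2 ∂μ2 ≤ S⁻¹ * ε := by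
    have step1 : ∫ t, ‖Q.eval t‖ ^ 2 ∂μ2
        ≤ ∫ t, (∑ j ∈ Finset.Icc m n,
            (‖(p j).eval z‖ / S) * ‖(p j).eval t‖) ^ 2 ∂μ2 :=
      integral_mono (int2 Q) intG hpt
    have step2 : ∫ t, (∑ j ∈ Finset.Icc m n,
          (‖(p j).eval z‖ / S) * ‖(p j).eval t‖) ^ 2 ∂μ2
        = ∑ i ∈ Finset.Icc m n, ∑ j ∈ Finset.Icc m n,
            ((‖(p i).eval z‖ / S) * (‖(p j).eval z‖ / S)) *
              ∫ t, ‖(p i).eval t‖ * ‖(p j).eval t‖ ∂μ2 := by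
      simp_rw [hG2]
      rw [integral_finset_sum _ (fun i _ =>
        integrable_finset_sum _ (fun j _ => ((intg2 i j).const_mul _)))]
      refine Finset.sum_congr rfl fun i _ => ?_
      rw [integral_finset_sum _ (fun j _ => ((intg2 i j).const_mul _))]
      exact Finset.sum_congr rfl fun j _ => integral_const_mul _ _
    have step3 : ∑ i ∈ Finset.Icc m n, ∑ j ∈ Finset.Icc m n,
          ((‖(p i).eval z‖ / S) * (‖(p j).eval z‖ / S)) *
            ∫ t, ‖(p i).eval t‖ * ‖(p j).eval t‖ ∂μ2
        ≤ ∑ i ∈ Finset.Icc m n, ∑ j ∈ Finset.Icc m n,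
          ((‖(p i).eval z‖ / S) * (‖(p j).eval z‖ / S)) *
            ((∫ t, ‖(p i).eval t‖ ^ 2 ∂μ2) ^ ((1:ℝ)/2)
              * (∫ t, ‖(p j).eval t‖ ^ 2 ∂μ2) ^ ((1:ℝ)/2)) := by
      refine Finset.sum_le_sum fun i _ => Finset.sum_le_sum fun j _ => ?_
      refine mul_le_mul_of_nonneg_left (hCS i j) ?_
      have h1 : (0:ℝ) ≤ ‖(p i).eval z‖ / S := by positivity
      have h2 : (0:ℝ) ≤ ‖(p j).eval z‖ / S := by positivity
      exact mul_nonneg h1 h2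
    have step4 : ∑ i ∈ Finset.Icc m n, ∑ j ∈ Finset.Icc m n,
          ((‖(p i).eval z‖ / S) * (‖(p j).eval z‖ / S)) *
            ((∫ t, ‖(p i).eval t‖ ^ 2 ∂μ2) ^ ((1:ℝ)/2)
              * (∫ t, ‖(p j).eval t‖ ^ 2 ∂μ2) ^ ((1:ℝ)/2))
        = (∑ j ∈ Finset.Icc m n, (‖(p j).eval z‖ / S)
            * (∫ t, ‖(p j).eval t‖ ^ 2 ∂μ2) ^ ((1:ℝ)/2)) ^ 2 := by
      rw [sq, Finset.sum_mul_sum]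
      exact Finset.sum_congr rfl fun i _ => Finset.sum_congr rfl fun j _ => by ring
    have step5 : (∑ j ∈ Finset.Icc m n, (‖(p j).eval z‖ / S)
          * (∫ t, ‖(p j).eval t‖ ^ 2 ∂μ2) ^ ((1:ℝ)/2)) ^ 2
        ≤ (∑ j ∈ Finset.Icc m n, (‖(p j).eval z‖ / S) ^ 2)
          * ∑ j ∈ Finset.Icc m n,
              ((∫ t, ‖(p j).eval t‖ ^ 2 ∂μ2) ^ ((1:ℝ)/2)) ^ 2 :=
      Finset.sum_mul_sq_le_sq_mul_sq _ _ _
    have step6 : (∑ j ∈ Finset.Icc m n, (‖(p j).eval z‖ / S) ^ 2)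
          * ∑ j ∈ Finset.Icc m n,
              ((∫ t, ‖(p j).eval t‖ ^ 2 ∂μ2) ^ ((1:ℝ)/2)) ^ 2
        ≤ S⁻¹ * ε := by
      rw [hsumA, Finset.sum_congr rfl fun j _ => hw2 j]
      exact mul_le_mul_of_nonneg_left htail (by positivity)
    calc ∫ t, ‖Q.eval t‖ ^ 2 ∂μ2 ≤ _ := step1
      _ = _ := step2
      _ ≤ _ := step3
      _ = _ := step4
      _ ≤ _ := step5
      _ ≤ S⁻¹ * ε := step6
  -- upper bound for christoffel μ0
  have upper0 : christoffel μ0 n z ≤ (1 + ε) / S := by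
    simp only [christoffel]
    have hmem : (∫ t, ‖Q.eval t‖ ^ 2 ∂μ0) ∈ {r : ℝ | ∃ P : Polynomial ℂ,
        P.natDegree ≤ n ∧ P.eval z = 1 ∧ r = ∫ t, ‖P.eval t‖ ^ 2 ∂μ0} :=
      ⟨Q, hQdeg, hQz, rfl⟩
    refine (csInf_le (hbdd μ0) hmem).trans ?_
    rw [hsplit Q, hQ1]
    have heq : (1 + ε) / S = S⁻¹ + S⁻¹ * ε := by
      field_simp
    rw [heq]
    linarith [hQ2]
  -- combine
  have hDnn : 0 ≤ (1 + ε) / M := by positivity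
  have mid : (1 + ε) / S ≤ (1 + ε + ((1 + ε) / M) * A) / (A + S) := by
    rw [div_le_div_iff₀ hS hKpos]
    have hD : ((1 + ε) / M) * M = 1 + ε := div_mul_cancel₀ _ hM.ne'
    nlinarith [mul_nonneg (mul_nonneg hDnn hA) (sub_nonneg.2 hlow.le)]
  have hRnn : 0 ≤ 1 + ε + ((1 + ε) / M) * A :=
    add_nonneg (by linarith) (mul_nonneg hDnn hA)
  have last : (1 + ε + ((1 + ε) / M) * A) / (A + S)
      ≤ christoffel μ1 n z * (1 + ε + ((1 + ε) / M) * A) := by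
    rw [div_eq_mul_inv, mul_comm (christoffel μ1 n z)]
    exact mul_le_mul_of_nonneg_left lower1 hRnn
  exact upper0.trans (mid.trans last)
end
end

section
/- If μ₀ is a PS perturbation of μ₁ such that in a neighborhood of infinity p_n(μ₁, z)/p_{n+1}(μ₁, z) → f(z) for some analytic function f, then also p_n(μ₀, z)/p_{n+1}(μ₀, z) → f(z) in a (possibly smaller) neighborhood of infinity. -/
open MeasureTheory Polynomial Filter

noncomputable section

namespace Stmt16Aux

lemma compl_msupp_null (μ : Measure ℂ) : μ (msupp μ)ᶜ = 0 := by
  apply measure_null_of_locally_null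
  intro x hx
  simp only [msupp, Set.mem_compl_iff, Set.mem_setOf_eq, not_forall] at hx
  obtain ⟨U, hU, hU0⟩ := hx
  exact ⟨U, nhdsWithin_le_nhds hU, by simpa using hU0⟩

lemma poly_abs_le (P : Polynomial ℂ) (M : ℝ) {z : ℂ} (hz : ‖z‖ ≤ M) :
    ‖P.eval z‖
      ≤ ∑ i ∈ Finset.range (P.natDegree + 1), ‖P.coeff i‖ * M ^ i := by
  rw [Polynomial.eval_eq_sum_range]
  refine le_trans (norm_sum_le _ _) (Finset.sum_le_sum fun i _ => ?_)
  rw [norm_mul, norm_pow]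
  exact mul_le_mul_of_nonneg_left (pow_le_pow_left₀ (norm_nonneg z) hz i)
    (norm_nonneg _)

lemma integrable_PQ {μ : Measure ℂ} [IsFiniteMeasure μ] {M : ℝ}
    (hae : ∀ᵐ z ∂μ, ‖z‖ ≤ M) (P Q : Polynomial ℂ) :
    Integrable (fun z => P.eval z * (starRingEnd ℂ) (Q.eval z)) μ := by
  set CP := ∑ i ∈ Finset.range (P.natDegree + 1), ‖P.coeff i‖ * M ^ i
  set CQ := ∑ i ∈ Finset.range (Q.natDegree + 1), ‖Q.coeff i‖ * M ^ i
  refine ⟨Continuous.aestronglyMeasurable (by continuity), ?_⟩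
  refine HasFiniteIntegral.of_bounded (C := CP * CQ) ?_
  filter_upwards [hae] with z hz
  have h1 := poly_abs_le P M hz
  have h2 := poly_abs_le Q M hz
  have heq : ‖P.eval z * (starRingEnd ℂ) (Q.eval z)‖
      = ‖P.eval z‖ * ‖Q.eval z‖ := by
    simp
  rw [heq]
  exact mul_le_mul h1 h2 (norm_nonneg _) (le_trans (norm_nonneg _) h1)

lemma integrable_sq {μ : Measure ℂ} [IsFiniteMeasure μ] {M : ℝ}
    (hae : ∀ᵐ z ∂μ, ‖z‖ ≤ M) (P : Polynomial ℂ) :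
    Integrable (fun z => ‖P.eval z‖ ^ 2) μ := by
  set CP := ∑ i ∈ Finset.range (P.natDegree + 1), ‖P.coeff i‖ * M ^ i
  refine ⟨Continuous.aestronglyMeasurable (by continuity), ?_⟩
  refine HasFiniteIntegral.of_bounded (C := CP ^ 2) ?_
  filter_upwards [hae] with z hz
  have h1 := poly_abs_le P M hz
  have heq : ‖‖P.eval z‖ ^ 2‖ = ‖P.eval z‖ ^ 2 := by
    simp [abs_of_nonneg, sq_nonneg]
  rw [heq]
  exact pow_le_pow_left₀ (norm_nonneg _) h1 2

lemma sq_int_eq (μ : Measure ℂ) (P : Polynomial ℂ) :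
    ∫ z, P.eval z * (starRingEnd ℂ) (P.eval z) ∂μ
      = ((∫ z, ‖P.eval z‖ ^ 2 ∂μ : ℝ) : ℂ) := by
  simp_rw [Complex.mul_conj, ← Complex.sq_norm]
  exact integral_ofReal

lemma exists_rep (p : ℕ → Polynomial ℂ) (hdeg : ∀ n, (p n).natDegree = n)
    (hlc : ∀ n, (p n).leadingCoeff ≠ 0) :
    ∀ (N : ℕ) (P : Polynomial ℂ), P.natDegree ≤ N →
      ∃ b : ℕ → ℂ, P = ∑ k ∈ Finset.range (N + 1), Polynomial.C (b k) * p k := by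
  intro N
  induction N with
  | zero =>
    intro P hP
    set c := (p 0).coeff 0 with hcdef
    have hc : c ≠ 0 := by
      have := hlc 0; rwa [Polynomial.leadingCoeff, hdeg 0] at this
    refine ⟨fun _ => P.coeff 0 / c, ?_⟩
    have h0 : p 0 = Polynomial.C c :=
      Polynomial.eq_C_of_natDegree_le_zero (le_of_eq (hdeg 0))
    have hP0 : P = Polynomial.C (P.coeff 0) := Polynomial.eq_C_of_natDegree_le_zero hP
    rw [Finset.range_one, Finset.sum_singleton, h0, ← Polynomial.C_mul,
      div_mul_cancel₀ _ hc, ← hP0]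
  | succ N ih =>
    intro P hP
    have hc : (p (N + 1)).coeff (N + 1) ≠ 0 := by
      have := hlc (N + 1); rwa [Polynomial.leadingCoeff, hdeg (N + 1)] at this
    set a := P.coeff (N + 1) / (p (N + 1)).coeff (N + 1) with ha
    have hQdeg : (P - Polynomial.C a * p (N + 1)).natDegree ≤ N := by
      refine Polynomial.natDegree_le_iff_coeff_eq_zero.mpr fun m hm => ?_
      rw [Polynomial.coeff_sub, Polynomial.coeff_C_mul]
      rcases eq_or_lt_of_le (Nat.succ_le_of_lt hm) with h | h
      · rw [← h, ha, div_mul_cancel₀ _ hc, sub_self]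
      · rw [Polynomial.coeff_eq_zero_of_natDegree_lt (lt_of_le_of_lt hP h),
          Polynomial.coeff_eq_zero_of_natDegree_lt (by rw [hdeg]; exact h), mul_zero, sub_zero]
    obtain ⟨b, hb⟩ := ih _ hQdeg
    refine ⟨fun k => if k = N + 1 then a else b k, ?_⟩
    rw [Finset.sum_range_succ]
    have heq : ∑ x ∈ Finset.range (N + 1), Polynomial.C (if x = N + 1 then a else b x) * p x
        = ∑ k ∈ Finset.range (N + 1), Polynomial.C (b k) * p k := by
      refine Finset.sum_congr rfl fun k hk => ?_
      rw [if_neg (by simp only [Finset.mem_range] at hk; omega)]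
    have htop : (fun k => if k = N + 1 then a else b k) (N + 1) = a := if_pos rfl
    rw [heq, htop, ← hb, sub_add_cancel]

lemma rep_coeff {μ : Measure ℂ} [IsFiniteMeasure μ] {M : ℝ}
    (hae : ∀ᵐ z ∂μ, ‖z‖ ≤ M)
    {p : ℕ → Polynomial ℂ} (hp : ONP μ p)
    {N : ℕ} {P : Polynomial ℂ} {b : ℕ → ℂ}
    (hrep : P = ∑ k ∈ Finset.range (N + 1), Polynomial.C (b k) * p k) :
    ∀ j ∈ Finset.range (N + 1),
      ∫ z, P.eval z * (starRingEnd ℂ) ((p j).eval z) ∂μ = b j := by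
  intro j hj
  have hint : ∀ k ∈ Finset.range (N + 1),
      Integrable (fun z => b k * ((p k).eval z * (starRingEnd ℂ) ((p j).eval z))) μ :=
    fun k _ => (integrable_PQ hae (p k) (p j)).const_mul _
  calc ∫ z, P.eval z * (starRingEnd ℂ) ((p j).eval z) ∂μ
      = ∫ z, ∑ k ∈ Finset.range (N + 1),
          b k * ((p k).eval z * (starRingEnd ℂ) ((p j).eval z)) ∂μ := by
        congr 1; funext z
        rw [hrep, Polynomial.eval_finset_sum, Finset.sum_mul]
        exact Finset.sum_congr rfl fun k _ => by rw [Polynomial.eval_mul, Polynomial.eval_C]; ring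
    _ = ∑ k ∈ Finset.range (N + 1),
          ∫ z, b k * ((p k).eval z * (starRingEnd ℂ) ((p j).eval z)) ∂μ :=
        integral_finset_sum _ hint
    _ = ∑ k ∈ Finset.range (N + 1),
          b k * ∫ z, (p k).eval z * (starRingEnd ℂ) ((p j).eval z) ∂μ :=
        Finset.sum_congr rfl fun k _ => integral_const_mul _ _
    _ = ∑ k ∈ Finset.range (N + 1), b k * (if k = j then 1 else 0) :=
        Finset.sum_congr rfl fun k _ => by rw [hp.2.2 k j]
    _ = b j := by
        rw [Finset.sum_congr rfl fun k _ => (mul_ite _ _ _ _ : _)]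
        simp [Finset.sum_ite_eq' (Finset.range (N + 1)) j, hj]

lemma rep_parseval {μ : Measure ℂ} [IsFiniteMeasure μ] {M : ℝ}
    (hae : ∀ᵐ z ∂μ, ‖z‖ ≤ M)
    {p : ℕ → Polynomial ℂ} (hp : ONP μ p)
    {N : ℕ} {P : Polynomial ℂ} {b : ℕ → ℂ}
    (hrep : P = ∑ k ∈ Finset.range (N + 1), Polynomial.C (b k) * p k) :
    ∫ z, ‖P.eval z‖ ^ 2 ∂μ
      = ∑ k ∈ Finset.range (N + 1), Complex.normSq (b k) := by
  have key : ∫ z, P.eval z * (starRingEnd ℂ) (P.eval z) ∂μ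
      = ((∑ k ∈ Finset.range (N + 1), Complex.normSq (b k) : ℝ) : ℂ) := by
    have hint : ∀ k ∈ Finset.range (N + 1),
        Integrable (fun z => b k * ((p k).eval z * (starRingEnd ℂ) (P.eval z))) μ :=
      fun k _ => (integrable_PQ hae (p k) P).const_mul _
    calc ∫ z, P.eval z * (starRingEnd ℂ) (P.eval z) ∂μ
        = ∫ z, ∑ k ∈ Finset.range (N + 1),
            b k * ((p k).eval z * (starRingEnd ℂ) (P.eval z)) ∂μ := by
          congr 1; funext z
          nth_rewrite 1 [hrep]
          rw [Polynomial.eval_finset_sum, Finset.sum_mul]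
          exact Finset.sum_congr rfl fun k _ => by
            rw [Polynomial.eval_mul, Polynomial.eval_C]; ring
      _ = ∑ k ∈ Finset.range (N + 1),
            b k * ∫ z, (p k).eval z * (starRingEnd ℂ) (P.eval z) ∂μ := by
          rw [integral_finset_sum _ hint]
          exact Finset.sum_congr rfl fun k _ => integral_const_mul _ _
      _ = ∑ k ∈ Finset.range (N + 1), b k * (starRingEnd ℂ) (b k) := by
          refine Finset.sum_congr rfl fun k hk => ?_
          congr 1
          have hconj : (fun z => (p k).eval z * (starRingEnd ℂ) (P.eval z))
              = fun z => (starRingEnd ℂ) (P.eval z * (starRingEnd ℂ) ((p k).eval z)) := by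
            funext z; rw [map_mul, Complex.conj_conj]; ring
          rw [hconj, integral_conj, rep_coeff hae hp hrep k hk]
      _ = ((∑ k ∈ Finset.range (N + 1), Complex.normSq (b k) : ℝ) : ℂ) := by
          push_cast
          exact Finset.sum_congr rfl fun k _ => (Complex.mul_conj _)
  have := (sq_int_eq μ P).symm.trans key
  exact_mod_cast this

lemma rep_top_coeff {p : ℕ → Polynomial ℂ} (hdeg : ∀ n, (p n).natDegree = n)
    {N : ℕ} {P : Polynomial ℂ} {b : ℕ → ℂ}
    (hrep : P = ∑ k ∈ Finset.range (N + 1), Polynomial.C (b k) * p k) :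
    P.coeff N = b N * (p N).coeff N := by
  rw [hrep, Polynomial.finset_sum_coeff, Finset.sum_range_succ]
  have hz : ∑ k ∈ Finset.range N, (Polynomial.C (b k) * p k).coeff N = 0 := by
    refine Finset.sum_eq_zero fun k hk => ?_
    rw [Polynomial.coeff_C_mul,
      Polynomial.coeff_eq_zero_of_natDegree_lt (by rw [hdeg]; exact Finset.mem_range.mp hk),
      mul_zero]
  rw [hz, zero_add, Polynomial.coeff_C_mul]

lemma onp_norm (μ : Measure ℂ) (q : ℕ → Polynomial ℂ) (hq : ONP μ q) (n : ℕ) :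
    ∫ z, ‖(q n).eval z‖ ^ 2 ∂μ = 1 := by
  have h := hq.2.2 n n
  rw [if_pos rfl, sq_int_eq] at h
  exact_mod_cast h

end Stmt16Aux
open Stmt16Aux in
set_option maxHeartbeats 1000000 in
/-- The class Ratio(f) is invariant under PS perturbations: if `p_n(μ₁,z)/p_{n+1}(μ₁,z) → f(z)`
in a neighborhood of infinity, the same holds for `μ₀` in a possibly smaller neighborhood. -/
theorem stmt_16 (μ0 μ1 μ2 : Measure ℂ) [IsFiniteMeasure μ1] [IsFiniteMeasure μ2]
    (hsum : μ0 = μ1 + μ2) (hμ2 : μ2 ≠ 0)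
    (h0c : IsCompact (msupp μ0)) (h0i : (msupp μ0).Infinite)
    (h1c : IsCompact (msupp μ1)) (h1i : (msupp μ1).Infinite)
    (p0 p1 : ℕ → Polynomial ℂ) (hp0 : ONP μ0 p0) (hp1 : ONP μ1 p1)
    (hPS : Tendsto (fun n => ∫ z, ‖(p1 n).eval z‖ ^ 2 ∂μ2) atTop (nhds 0))
    (f : ℂ → ℂ) (R : ℝ)
    (hf : AnalyticOn ℂ f {z : ℂ | R < ‖z‖})
    (hratio : ∀ z : ℂ, R < ‖z‖ →
      Tendsto (fun n => (p1 n).eval z / (p1 (n + 1)).eval z) atTop (nhds (f z))) :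
    ∃ R' : ℝ, R ≤ R' ∧ ∀ z : ℂ, R' < ‖z‖ →
      Tendsto (fun n => (p0 n).eval z / (p0 (n + 1)).eval z) atTop (nhds (f z)) := by
  classical
  haveI hfin0 : IsFiniteMeasure μ0 := by rw [hsum]; infer_instance
  obtain ⟨r, hr⟩ := h0c.isBounded.subset_closedBall 0
  set M : ℝ := max r 1 with hMdef
  have hM1 : (1:ℝ) ≤ M := le_max_right _ _
  have hM0 : (0:ℝ) < M := lt_of_lt_of_le one_pos hM1
  -- a.e. bounds
  have hae0 : ∀ᵐ z ∂μ0, ‖z‖ ≤ M := by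
    rw [ae_iff]
    refine measure_mono_null (fun z hz => ?_) (compl_msupp_null μ0)
    simp only [Set.mem_setOf_eq, not_le] at hz
    intro hzin
    have hmem := hr hzin
    rw [Metric.mem_closedBall, Complex.dist_eq, sub_zero] at hmem
    exact absurd (le_trans hmem (le_max_left _ _)) (not_le.mpr hz)
  have hle1 : μ1 ≤ μ0 := by rw [hsum]; exact Measure.le_add_right le_rfl
  have hle2 : μ2 ≤ μ0 := by rw [hsum]; exact Measure.le_add_left le_rfl
  have hae1 : ∀ᵐ z ∂μ1, ‖z‖ ≤ M := hae0.filter_mono (ae_mono hle1)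
  have hae2 : ∀ᵐ z ∂μ2, ‖z‖ ≤ M := hae0.filter_mono (ae_mono hle2)
  -- basic facts about the polynomials
  have hdeg0 := hp0.1
  have hdeg1 := hp1.1
  have hlc0 : ∀ n, (p0 n).leadingCoeff ≠ 0 := fun n h => by
    have := (hp0.2.1 n).1; rw [h] at this; simp at this
  have hlc1 : ∀ n, (p1 n).leadingCoeff ≠ 0 := fun n h => by
    have := (hp1.2.1 n).1; rw [h] at this; simp at this
  -- the perturbation size
  set ε : ℕ → ℝ := fun n => ∫ z, ‖(p1 n).eval z‖ ^ 2 ∂μ2 with hεdef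
  have hε0 : ∀ n, 0 ≤ ε n := fun n => integral_nonneg fun z => sq_nonneg _
  have hPS' : Tendsto ε atTop (nhds 0) := hPS
  -- splitting integrals
  have hsplit : ∀ P : Polynomial ℂ, ∫ z, ‖P.eval z‖ ^ 2 ∂μ0
      = (∫ z, ‖P.eval z‖ ^ 2 ∂μ1) + ∫ z, ‖P.eval z‖ ^ 2 ∂μ2 := by
    intro P
    rw [hsum]
    exact integral_add_measure (integrable_sq hae1 P) (integrable_sq hae2 P)
  have hμ0norm1 : ∀ n, ∫ z, ‖(p1 n).eval z‖ ^ 2 ∂μ0 = 1 + ε n := fun n => by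
    rw [hsplit, onp_norm μ1 p1 hp1 n]
  have hμ1normle : ∀ n, ∫ z, ‖(p0 n).eval z‖ ^ 2 ∂μ1 ≤ 1 := fun n => by
    have h := hsplit (p0 n)
    rw [onp_norm μ0 p0 hp0 n] at h
    have h2 : 0 ≤ ∫ z, ‖(p0 n).eval z‖ ^ 2 ∂μ2 :=
      integral_nonneg fun z => sq_nonneg _
    linarith
  -- expansions
  choose b hb using fun n => exists_rep p0 hdeg0 hlc0 n (p1 n) (le_of_eq (hdeg1 n))
  choose d hd using fun n => exists_rep p1 hdeg1 hlc1 n (p0 n) (le_of_eq (hdeg0 n))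
  -- the ratio of leading coefficients
  set c : ℕ → ℝ := fun n => ((p1 n).leadingCoeff.re) / ((p0 n).leadingCoeff.re) with hcdef
  have hcpos : ∀ n, 0 < c n := fun n => div_pos (hp1.2.1 n).1 (hp0.2.1 n).1
  have hlead0 : ∀ n, (p0 n).leadingCoeff = (((p0 n).leadingCoeff.re : ℝ) : ℂ) := fun n =>
    Complex.ext rfl (by rw [(hp0.2.1 n).2]; simp)
  have hlead1 : ∀ n, (p1 n).leadingCoeff = (((p1 n).leadingCoeff.re : ℝ) : ℂ) := fun n =>
    Complex.ext rfl (by rw [(hp1.2.1 n).2]; simp)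
  have h0rene : ∀ n, (((p0 n).leadingCoeff.re : ℝ) : ℂ) ≠ 0 := fun n => by
    exact_mod_cast ne_of_gt (hp0.2.1 n).1
  have h1rene : ∀ n, (((p1 n).leadingCoeff.re : ℝ) : ℂ) ≠ 0 := fun n => by
    exact_mod_cast ne_of_gt (hp1.2.1 n).1
  have hbnn : ∀ n, b n n = ((c n : ℝ) : ℂ) := by
    intro n
    have h := rep_top_coeff hdeg0 (hb n)
    have e1 : (p1 n).coeff n = (p1 n).leadingCoeff := by rw [Polynomial.leadingCoeff, hdeg1 n]
    have e0 : (p0 n).coeff n = (p0 n).leadingCoeff := by rw [Polynomial.leadingCoeff, hdeg0 n]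
    rw [e1, e0, hlead1 n, hlead0 n] at h
    have h2 : b n n = (((p1 n).leadingCoeff.re : ℝ) : ℂ) / (((p0 n).leadingCoeff.re : ℝ) : ℂ) :=
      (eq_div_iff (h0rene n)).mpr h.symm
    rw [h2, hcdef]
    push_cast
    ring
  have hdnn : ∀ n, d n n = (((c n)⁻¹ : ℝ) : ℂ) := by
    intro n
    have h := rep_top_coeff hdeg1 (hd n)
    have e1 : (p1 n).coeff n = (p1 n).leadingCoeff := by rw [Polynomial.leadingCoeff, hdeg1 n]
    have e0 : (p0 n).coeff n = (p0 n).leadingCoeff := by rw [Polynomial.leadingCoeff, hdeg0 n]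
    rw [e1, e0, hlead1 n, hlead0 n] at h
    have h2 : d n n = (((p0 n).leadingCoeff.re : ℝ) : ℂ) / (((p1 n).leadingCoeff.re : ℝ) : ℂ) :=
      (eq_div_iff (h1rene n)).mpr h.symm
    rw [h2, hcdef]
    rw [inv_div]
    push_cast
    ring
  -- Parseval identities
  have hPars0 : ∀ n, ∑ k ∈ Finset.range (n + 1), Complex.normSq (b n k) = 1 + ε n := fun n =>
    (rep_parseval hae0 hp0 (hb n)).symm.trans (hμ0norm1 n)
  have hPars1 : ∀ n, ∑ k ∈ Finset.range (n + 1), Complex.normSq (d n k) ≤ 1 := fun n => by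
    rw [← rep_parseval hae1 hp1 (hd n)]
    exact hμ1normle n
  -- bounds on c
  have hc_ge1 : ∀ n, 1 ≤ c n := by
    intro n
    have h1 : Complex.normSq (d n n) ≤ 1 :=
      le_trans (Finset.single_le_sum (fun k _ => Complex.normSq_nonneg _)
        (Finset.self_mem_range_succ n)) (hPars1 n)
    rw [hdnn n, Complex.normSq_ofReal] at h1
    have hci : c n * (c n)⁻¹ = 1 := mul_inv_cancel₀ (ne_of_gt (hcpos n))
    nlinarith [hcpos n, inv_pos.mpr (hcpos n)]
  have hc_le : ∀ n, c n ≤ 1 + ε n := by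
    intro n
    have h1 : Complex.normSq (b n n) ≤ 1 + ε n :=
      le_of_le_of_eq (Finset.single_le_sum (fun k _ => Complex.normSq_nonneg _)
        (Finset.self_mem_range_succ n)) (hPars0 n)
    rw [hbnn n, Complex.normSq_ofReal] at h1
    nlinarith [hc_ge1 n]
  have hctend : Tendsto c atTop (nhds 1) := by
    have h2 : Tendsto (fun n => 1 + ε n) atTop (nhds 1) := by
      simpa using tendsto_const_nhds.add hPS'
    exact tendsto_of_tendsto_of_tendsto_of_le_of_le tendsto_const_nhds h2 hc_ge1 hc_le
  -- the tail bound
  have htail : ∀ n, ∑ k ∈ Finset.range n, Complex.normSq (b n k) ≤ ε n := by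
    intro n
    have h := hPars0 n
    rw [Finset.sum_range_succ, hbnn n, Complex.normSq_ofReal] at h
    nlinarith [hc_ge1 n]
  -- Hessenberg coefficients
  have hXdeg : ∀ k, (Polynomial.X * p0 k).natDegree = k + 1 := fun k => by
    rw [Polynomial.natDegree_mul Polynomial.X_ne_zero
      (Polynomial.leadingCoeff_ne_zero.mp (hlc0 k)), Polynomial.natDegree_X, hdeg0 k, add_comm]
  choose h hh using fun k =>
    exists_rep p0 hdeg0 hlc0 (k + 1) (Polynomial.X * p0 k) (le_of_eq (hXdeg k))
  have hHsum : ∀ k, ∑ j ∈ Finset.range (k + 2), Complex.normSq (h k j) ≤ M ^ 2 := by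
    intro k
    rw [← rep_parseval hae0 hp0 (hh k)]
    have hb1 : ∀ᵐ z ∂μ0, ‖(Polynomial.X * p0 k).eval z‖ ^ 2
        ≤ M ^ 2 * ‖(p0 k).eval z‖ ^ 2 := by
      filter_upwards [hae0] with z hz
      rw [Polynomial.eval_mul, Polynomial.eval_X, norm_mul, mul_pow]
      exact mul_le_mul_of_nonneg_right (pow_le_pow_left₀ (norm_nonneg z) hz 2)
        (sq_nonneg _)
    have hi1 : Integrable (fun z => ‖(Polynomial.X * p0 k).eval z‖ ^ 2) μ0 :=
      integrable_sq hae0 (Polynomial.X * p0 k)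
    have hi2 : Integrable (fun z => M ^ 2 * ‖(p0 k).eval z‖ ^ 2) μ0 :=
      (integrable_sq hae0 (p0 k)).const_mul (M ^ 2)
    have hmono := integral_mono_ae hi1 hi2 hb1
    have heq2 : ∫ z, M ^ 2 * ‖(p0 k).eval z‖ ^ 2 ∂μ0 = M ^ 2 := by
      rw [integral_const_mul, onp_norm μ0 p0 hp0 k, mul_one]
    linarith [hmono]
  have hHtople : ∀ k, ‖h k (k + 1)‖ ≤ M := by
    intro k
    have h1 : Complex.normSq (h k (k + 1)) ≤ M ^ 2 :=
      le_trans (Finset.single_le_sum (fun j _ => Complex.normSq_nonneg _)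
        (Finset.self_mem_range_succ (k + 1))) (hHsum k)
    have h2 : ‖h k (k + 1)‖ ^ 2 ≤ M ^ 2 := by rw [Complex.sq_norm]; exact h1
    nlinarith [norm_nonneg (h k (k + 1)), hM0]
  -- choose R'
  refine ⟨max R (4 * M), le_max_left _ _, ?_⟩
  intro z hz
  have hzR : R < ‖z‖ := lt_of_le_of_lt (le_max_left _ _) hz
  have hz4 : 4 * M < ‖z‖ := lt_of_le_of_lt (le_max_right _ _) hz
  set A : ℕ → ℝ := fun k => ‖(p0 k).eval z‖ with hAdef
  have hA0 : ∀ k, 0 ≤ A k := fun k => norm_nonneg _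
  have heval : ∀ k, z * (p0 k).eval z
      = ∑ j ∈ Finset.range (k + 2), h k j * (p0 j).eval z := by
    intro k
    have := congrArg (Polynomial.eval z) (hh k)
    simpa [Polynomial.eval_finset_sum] using this
  -- Cauchy-Schwarz helper
  have hCS : ∀ (n : ℕ) (u : ℕ → ℂ) (S T : ℝ), 0 ≤ S → 0 ≤ T →
      (∑ j ∈ Finset.range n, Complex.normSq (u j)) ≤ S ^ 2 →
      (∑ j ∈ Finset.range n, A j ^ 2) ≤ T ^ 2 →
      ‖∑ j ∈ Finset.range n, u j * (p0 j).eval z‖ ≤ S * T := by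
    intro n u S T hS hT hu hA
    have step1 : ‖∑ j ∈ Finset.range n, u j * (p0 j).eval z‖
        ≤ ∑ j ∈ Finset.range n, ‖u j‖ * A j := by
      refine le_trans (norm_sum_le _ _) (le_of_eq ?_)
      exact Finset.sum_congr rfl fun j _ => norm_mul _ _
    refine le_trans step1 ?_
    have key : (∑ j ∈ Finset.range n, ‖u j‖ * A j) ^ 2
        ≤ (∑ j ∈ Finset.range n, ‖u j‖ ^ 2) * (∑ j ∈ Finset.range n, A j ^ 2) :=
      Finset.sum_mul_sq_le_sq_mul_sq _ _ _
    have h1 : (∑ j ∈ Finset.range n, ‖u j‖ ^ 2) ≤ S ^ 2 :=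
      le_trans (le_of_eq (Finset.sum_congr rfl fun j _ => Complex.sq_norm _)) hu
    have hAnn : 0 ≤ ∑ j ∈ Finset.range n, A j ^ 2 :=
      Finset.sum_nonneg fun j _ => sq_nonneg _
    have h2 : (∑ j ∈ Finset.range n, ‖u j‖ * A j) ^ 2 ≤ (S * T) ^ 2 := by
      have := mul_le_mul h1 hA hAnn (sq_nonneg S)
      nlinarith [key]
    have hsn : 0 ≤ ∑ j ∈ Finset.range n, ‖u j‖ * A j :=
      Finset.sum_nonneg fun j _ => mul_nonneg (norm_nonneg _) (hA0 j)
    nlinarith [mul_nonneg hS hT]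
  -- growth step
  have hstep : ∀ k, 0 < A k → (∑ j ∈ Finset.range (k + 1), A j ^ 2) ≤ 4 * A k ^ 2 →
      2 * A k ≤ A (k + 1) := by
    intro k hpos hsum4
    have hid : h k (k + 1) * (p0 (k + 1)).eval z
        = z * (p0 k).eval z - ∑ j ∈ Finset.range (k + 1), h k j * (p0 j).eval z := by
      rw [heval k, Finset.sum_range_succ]; ring
    have hlow : ‖∑ j ∈ Finset.range (k + 1), h k j * (p0 j).eval z‖
        ≤ M * (2 * A k) := by
      refine hCS (k + 1) (h k) M (2 * A k) (le_of_lt hM0) (by positivity) ?_ ?_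
      · refine le_trans (Finset.sum_le_sum_of_subset_of_nonneg ?_
          (fun j _ _ => Complex.normSq_nonneg _)) (hHsum k)
        exact Finset.range_subset_range.mpr (by omega)
      · calc ∑ j ∈ Finset.range (k + 1), A j ^ 2 ≤ 4 * A k ^ 2 := hsum4
          _ = (2 * A k) ^ 2 := by ring
    have e1 : ‖h k (k + 1) * (p0 (k + 1)).eval z‖
        = ‖h k (k + 1)‖ * A (k + 1) := norm_mul _ _
    have e2 : ‖h k (k + 1)‖ * A (k + 1) ≤ M * A (k + 1) :=
      mul_le_mul_of_nonneg_right (hHtople k) (hA0 _)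
    have e3 : ‖z‖ * A k
        - ‖∑ j ∈ Finset.range (k + 1), h k j * (p0 j).eval z‖
        ≤ ‖h k (k + 1) * (p0 (k + 1)).eval z‖ := by
      rw [hid]
      have hns := norm_sub_norm_le (z * (p0 k).eval z)
        (∑ j ∈ Finset.range (k + 1), h k j * (p0 j).eval z)
      simpa [norm_mul] using hns
    have hMA : 2 * M * A k ≤ M * A (k + 1) := by nlinarith [hA0 k]
    have hMA2 : M * (2 * A k) ≤ M * A (k + 1) := by linarith
    exact le_of_mul_le_mul_left hMA2 hM0
  -- main induction
  have hmain : ∀ k, 0 < A k ∧ (∑ j ∈ Finset.range (k + 1), A j ^ 2) ≤ 4 * A k ^ 2 := by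
    intro k
    induction k with
    | zero =>
      constructor
      · have hne : (p0 0).coeff 0 ≠ 0 := by
          have := hlc0 0; rwa [Polynomial.leadingCoeff, hdeg0 0] at this
        have h00 : (p0 0).eval z = (p0 0).coeff 0 := by
          conv_lhs => rw [Polynomial.eq_C_of_natDegree_le_zero (le_of_eq (hdeg0 0))]
          simp
        rw [hAdef]
        simp only [h00]
        exact norm_pos_iff.mpr hne
      · rw [Finset.sum_range_one]
        nlinarith [sq_nonneg (A 0)]
    | succ k ih =>
      obtain ⟨h1, h2⟩ := ih
      have h3 := hstep k h1 h2
      have hpos : 0 < A (k + 1) := lt_of_lt_of_le (by linarith) h3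
      refine ⟨hpos, ?_⟩
      rw [Finset.sum_range_succ]
      have hsq : (2 * A k) * (2 * A k) ≤ A (k + 1) * A (k + 1) :=
        mul_self_le_mul_self (by positivity) h3
      nlinarith [h2, sq_nonneg (A (k + 1))]
  have hAne : ∀ k, (p0 k).eval z ≠ 0 := by
    intro k h0
    have := (hmain k).1
    rw [hAdef] at this
    simp only [h0, norm_zero] at this
    exact lt_irrefl 0 this
  have hgrow : ∀ n, (∑ j ∈ Finset.range n, A j ^ 2) ≤ A n ^ 2 := by
    intro n
    cases n with
    | zero => simpa using sq_nonneg (A 0)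
    | succ m =>
      have h2 := (hmain m).2
      have h3 := hstep m (hmain m).1 h2
      have hsq : (2 * A m) * (2 * A m) ≤ A (m + 1) * A (m + 1) :=
        mul_self_le_mul_self (by positivity) h3
      nlinarith [h2]
  -- pointwise estimate
  have hpt : ∀ n, ‖(p1 n).eval z - ((c n : ℝ) : ℂ) * (p0 n).eval z‖
      ≤ Real.sqrt (ε n) * A n := by
    intro n
    have hev : (p1 n).eval z = ∑ k ∈ Finset.range (n + 1), b n k * (p0 k).eval z := by
      have := congrArg (Polynomial.eval z) (hb n)
      simpa [Polynomial.eval_finset_sum] using this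
    have hdiff : (p1 n).eval z - ((c n : ℝ) : ℂ) * (p0 n).eval z
        = ∑ k ∈ Finset.range n, b n k * (p0 k).eval z := by
      rw [hev, Finset.sum_range_succ, hbnn n]; ring
    rw [hdiff]
    refine hCS n (b n) (Real.sqrt (ε n)) (A n) (Real.sqrt_nonneg _) (hA0 n) ?_ (hgrow n)
    rw [Real.sq_sqrt (hε0 n)]
    exact htail n
  -- the ratio p1/p0 tends to 1
  have hgtend : Tendsto (fun n => (p1 n).eval z / (p0 n).eval z) atTop (nhds 1) := by
    rw [tendsto_iff_norm_sub_tendsto_zero]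
    have bound : ∀ n, ‖(p1 n).eval z / (p0 n).eval z - 1‖ ≤ Real.sqrt (ε n) + (c n - 1) := by
      intro n
      have e1 : ‖(p1 n).eval z / (p0 n).eval z - ((c n : ℝ) : ℂ)‖ ≤ Real.sqrt (ε n) := by
        have hrw : (p1 n).eval z / (p0 n).eval z - ((c n : ℝ) : ℂ)
            = ((p1 n).eval z - ((c n : ℝ) : ℂ) * (p0 n).eval z) / (p0 n).eval z := by
          rw [eq_div_iff (hAne n), sub_mul, div_mul_cancel₀ _ (hAne n)]
        rw [hrw, norm_div]
        have hApos : 0 < A n := (hmain n).1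
        rw [div_le_iff₀ hApos]
        exact hpt n
      have e2 : ‖((c n : ℝ) : ℂ) - 1‖ = c n - 1 := by
        rw [show ((c n : ℝ) : ℂ) - 1 = ((c n - 1 : ℝ) : ℂ) by push_cast; ring]
        rw [Complex.norm_real]
        exact abs_of_nonneg (by linarith [hc_ge1 n])
      calc ‖(p1 n).eval z / (p0 n).eval z - 1‖
          = ‖((p1 n).eval z / (p0 n).eval z - ((c n : ℝ) : ℂ)) + (((c n : ℝ) : ℂ) - 1)‖ := by
            rw [sub_add_sub_cancel]
        _ ≤ ‖(p1 n).eval z / (p0 n).eval z - ((c n : ℝ) : ℂ)‖ + ‖((c n : ℝ) : ℂ) - 1‖ :=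
            norm_add_le _ _
        _ ≤ Real.sqrt (ε n) + (c n - 1) := add_le_add e1 (le_of_eq e2)
    have hb0 : Tendsto (fun n => Real.sqrt (ε n) + (c n - 1)) atTop (nhds 0) := by
      have hs : Tendsto (fun n => Real.sqrt (ε n)) atTop (nhds 0) := by
        have := (Real.continuous_sqrt.tendsto 0).comp hPS'
        simpa [Function.comp_def] using this
      have hc0 : Tendsto (fun n => c n - 1) atTop (nhds 0) := by
        have := hctend.sub (tendsto_const_nhds (x := (1:ℝ)))
        simpa using this
      simpa using hs.add hc0
    exact squeeze_zero (fun n => norm_nonneg _) bound hb0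
  -- final assembly
  have hinv : Tendsto (fun n => (p0 n).eval z / (p1 n).eval z) atTop (nhds 1) := by
    have := hgtend.inv₀ one_ne_zero
    simpa [inv_div] using this
  have hshift : Tendsto (fun n => (p1 (n + 1)).eval z / (p0 (n + 1)).eval z) atTop (nhds 1) :=
    hgtend.comp (tendsto_add_atTop_nat 1)
  have hne1 : ∀ᶠ n in atTop, (p1 n).eval z ≠ 0 := by
    have hev : ∀ᶠ n in atTop, (p1 n).eval z / (p0 n).eval z ≠ 0 :=
      hgtend.eventually_ne one_ne_zero
    filter_upwards [hev] with n hn h0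
    exact hn (by rw [h0, zero_div])
  have hne1' : ∀ᶠ n in atTop, (p1 (n + 1)).eval z ≠ 0 :=
    (tendsto_add_atTop_nat 1).eventually hne1
  have heqev : (fun n => ((p0 n).eval z / (p1 n).eval z) * ((p1 n).eval z / (p1 (n + 1)).eval z)
        * ((p1 (n + 1)).eval z / (p0 (n + 1)).eval z))
      =ᶠ[atTop] fun n => (p0 n).eval z / (p0 (n + 1)).eval z := by
    filter_upwards [hne1, hne1'] with n h1 h2
    field_simp
  have hprod : Tendsto (fun n => ((p0 n).eval z / (p1 n).eval z)
      * ((p1 n).eval z / (p1 (n + 1)).eval z)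
      * ((p1 (n + 1)).eval z / (p0 (n + 1)).eval z)) atTop (nhds (f z)) := by
    have := (hinv.mul (hratio z hzR)).mul hshift
    simpa using this
  exact hprod.congr' heqev
end
end
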